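/- arXiv:2104.02013 — 5 statements merged into one kernel-verified Lean document; each statement's English description precedes it below -/
import Mathlib

section
/- Let (X, P_X), (Y, P_Y), (Z, P_Z) be finite metric measure spaces equipped with m-pointed partitions, and suppose μ_X, μ_Y, and μ_Z are fully supported. Then the quantized Gromov–Wasserstein distance satisfies the triangle inequality: d_qGW((X,P_X),(Z,P_Z)) ≤ d_qGW((X,P_X),(Y,P_Y)) + d_qGW((Y,P_Y),(Z,P_Z)). -/
open Finset

noncomputable section

/-- A probability vector on a finite type. -/
def IsProb {X : Type*} [Fintype X] (μ : X → ℝ) : Prop :=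
  (∀ x, 0 ≤ μ x) ∧ (∑ x, μ x) = 1

/-- `μ` is a coupling of the probability vectors `μX` and `μY`. -/
def IsCoupling {X Y : Type*} [Fintype X] [Fintype Y]
    (μX : X → ℝ) (μY : Y → ℝ) (μ : X → Y → ℝ) : Prop :=
  (∀ x y, 0 ≤ μ x y) ∧ (∀ x, (∑ y, μ x y) = μX x) ∧ (∀ y, (∑ x, μ x y) = μY y)

/-- The Gromov–Wasserstein loss of a coupling, for given distance functions. -/
def GWLoss {X Y : Type*} [Fintype X] [Fintype Y]
    (dX : X → X → ℝ) (dY : Y → Y → ℝ) (μ : X → Y → ℝ) : ℝ :=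
  ∑ x, ∑ y, ∑ x', ∑ y', (dX x x' - dY y y') ^ 2 * μ x y * μ x' y'

/-- The Gromov–Wasserstein distance between two finite mm-spaces. -/
def dGW {X Y : Type*} [Fintype X] [Fintype Y]
    (dX : X → X → ℝ) (dY : Y → Y → ℝ) (μX : X → ℝ) (μY : Y → ℝ) : ℝ :=
  sInf {r : ℝ | ∃ μ, IsCoupling μX μY μ ∧ r = Real.sqrt (GWLoss dX dY μ)}

/-- An `m`-pointed partition of `X`: each point is assigned to one of `m` blocks
(`part`), and each block `p` has a distinguished representative `rep p` lying in it.
Blocks are the fibers of `part`; they are disjoint, cover `X`, and are nonempty. -/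
structure PointedPartition (X : Type*) (m : ℕ) where
  part : X → Fin m
  rep : Fin m → X
  part_rep : ∀ p, part (rep p) = p

/-- The mass `μ_X(Uᵖ)` of the block `Uᵖ`; as a function of `p` this is the measure
`μ_{P_X}` of the quantized representation `Xᵐ` (identified with `Fin m`). -/
def blockMass {X : Type*} [Fintype X] (μX : X → ℝ) {m : ℕ}
    (P : PointedPartition X m) (p : Fin m) : ℝ :=
  ∑ x, if P.part x = p then μX x else 0

/-- The normalized measure `μ_{Uᵖ} = μ_X|_{Uᵖ} / μ_X(Uᵖ)` of a block, extended by zero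
to all of `X` (this is `μ̄_{Uᵖ}`). -/
def blockMeasure {X : Type*} [Fintype X] (μX : X → ℝ) {m : ℕ}
    (P : PointedPartition X m) (p : Fin m) (x : X) : ℝ :=
  if P.part x = p then μX x / blockMass μX P p else 0

/-- `μ` is a quantization coupling: `μ(x,y) = Σ_{p,q} μm(xᵖ,y^q) μ̄_{xᵖ,y^q}(x,y)` where
`μm` couples the quantized measures and each `ν p q` is (the extension by zero of) a
coupling of the block measures with `ν p q (xᵖ, y^q) > 0`. -/
def IsQuantCoupling {X Y : Type*} [Fintype X] [Fintype Y] {m : ℕ}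
    (μX : X → ℝ) (μY : Y → ℝ)
    (PX : PointedPartition X m) (PY : PointedPartition Y m)
    (μ : X → Y → ℝ) : Prop :=
  ∃ (μm : Fin m → Fin m → ℝ) (ν : Fin m → Fin m → X → Y → ℝ),
    IsCoupling (blockMass μX PX) (blockMass μY PY) μm ∧
    (∀ p q, IsCoupling (blockMeasure μX PX p) (blockMeasure μY PY q) (ν p q)) ∧
    (∀ p q, 0 < ν p q (PX.rep p) (PY.rep q)) ∧
    (∀ x y, μ x y = ∑ p, ∑ q, μm p q * ν p q x y)

/-- The quantized Gromov–Wasserstein distance between `m`-pointed mm-spaces. -/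
def dqGW {X Y : Type*} [Fintype X] [Fintype Y] {m : ℕ}
    (dX : X → X → ℝ) (dY : Y → Y → ℝ) (μX : X → ℝ) (μY : Y → ℝ)
    (PX : PointedPartition X m) (PY : PointedPartition Y m) : ℝ :=
  sInf {r : ℝ | ∃ μ, IsQuantCoupling μX μY PX PY μ ∧ r = Real.sqrt (GWLoss dX dY μ)}

/-- The quantized eccentricity `q(P_X) = (Σ_p μ_X(Uᵖ) s_{Uᵖ}(xᵖ)²)^{1/2}`, where
`s_{Uᵖ}(xᵖ)² = Σ_{x ∈ Uᵖ} d_X(xᵖ,x)² μ_{Uᵖ}(x)`. -/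
def qEcc {X : Type*} [Fintype X] (dX : X → X → ℝ) (μX : X → ℝ) {m : ℕ}
    (P : PointedPartition X m) : ℝ :=
  Real.sqrt (∑ p, blockMass μX P p * ∑ x, dX (P.rep p) x ^ 2 * blockMeasure μX P p x)

/-- The `m`-quantized eccentricity `q_m(X)`: minimum of `q(P_X)` over `m`-pointed
partitions. -/
def qEccMin (X : Type*) [Fintype X] (dX : X → X → ℝ) (μX : X → ℝ) (m : ℕ) : ℝ :=
  sInf {r : ℝ | ∃ P : PointedPartition X m, r = qEcc dX μX P}

end


section Helpers
open Finset

/-- Minkowski-type inequality for weighted finite sums. -/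
lemma my_sqrt_add_le {ι : Type*} [Fintype ι] (f g w : ι → ℝ) (hw : ∀ i, 0 ≤ w i) :
    Real.sqrt (∑ i, (f i + g i)^2 * w i) ≤
      Real.sqrt (∑ i, f i ^2 * w i) + Real.sqrt (∑ i, g i ^2 * w i) := by
  set A := Real.sqrt (∑ i, f i ^2 * w i) with hA
  set B := Real.sqrt (∑ i, g i ^2 * w i) with hB
  have hf : 0 ≤ ∑ i, f i ^2 * w i := Finset.sum_nonneg fun i _ => mul_nonneg (sq_nonneg _) (hw i)
  have hg : 0 ≤ ∑ i, g i ^2 * w i := Finset.sum_nonneg fun i _ => mul_nonneg (sq_nonneg _) (hw i)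
  have hA0 : 0 ≤ A := Real.sqrt_nonneg _
  have hB0 : 0 ≤ B := Real.sqrt_nonneg _
  have hAsq : A^2 = ∑ i, f i ^2 * w i := Real.sq_sqrt hf
  have hBsq : B^2 = ∑ i, g i ^2 * w i := Real.sq_sqrt hg
  have hcs : ∑ i, f i * g i * w i ≤ A * B := by
    have h1 : (∑ i, (f i * Real.sqrt (w i)) * (g i * Real.sqrt (w i)))^2 ≤
        (∑ i, (f i * Real.sqrt (w i))^2) * (∑ i, (g i * Real.sqrt (w i))^2) :=
      Finset.sum_mul_sq_le_sq_mul_sq _ _ _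
    have e1 : ∀ i, (f i * Real.sqrt (w i)) * (g i * Real.sqrt (w i)) = f i * g i * w i := by
      intro i
      rw [show (f i * Real.sqrt (w i)) * (g i * Real.sqrt (w i))
          = f i * g i * (Real.sqrt (w i) * Real.sqrt (w i)) from by ring,
        Real.mul_self_sqrt (hw i)]
    have e2 : ∀ i, (f i * Real.sqrt (w i))^2 = f i ^2 * w i := by
      intro i; rw [mul_pow, Real.sq_sqrt (hw i)]
    have e3 : ∀ i, (g i * Real.sqrt (w i))^2 = g i ^2 * w i := by
      intro i; rw [mul_pow, Real.sq_sqrt (hw i)]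
    simp only [e1, e2, e3] at h1
    rw [← hAsq, ← hBsq] at h1
    nlinarith [mul_nonneg hA0 hB0, h1]
  have hS : ∑ i, (f i + g i)^2 * w i ≤ (A + B)^2 := by
    have : ∑ i, (f i + g i)^2 * w i
        = (∑ i, f i ^2 * w i) + 2 * (∑ i, f i * g i * w i) + (∑ i, g i ^2 * w i) := by
      rw [Finset.mul_sum, ← Finset.sum_add_distrib, ← Finset.sum_add_distrib]
      exact Finset.sum_congr rfl fun i _ => by ring
    rw [this, ← hAsq, ← hBsq]
    nlinarith [hcs]
  calc Real.sqrt (∑ i, (f i + g i)^2 * w i) ≤ Real.sqrt ((A + B)^2) := Real.sqrt_le_sqrt hS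
    _ = A + B := Real.sqrt_sq (by linarith)

lemma my_sum_fiber {T S : Type*} [Fintype T] [Fintype S] [DecidableEq S]
    (pr : T → S) (π : T → ℝ) (μ : S → ℝ)
    (h : ∀ s, (∑ t, if pr t = s then π t else 0) = μ s) (G : S → ℝ) :
    ∑ t, G (pr t) * π t = ∑ s, G s * μ s := by
  calc ∑ t, G (pr t) * π t
      = ∑ t, ∑ s, (if pr t = s then G s * π t else 0) := by
        refine Finset.sum_congr rfl fun t _ => ?_
        rw [Finset.sum_ite_eq Finset.univ (pr t) (fun s => G s * π t)]
        simp
    _ = ∑ s, ∑ t, (if pr t = s then G s * π t else 0) := Finset.sum_comm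
    _ = ∑ s, G s * μ s := by
        refine Finset.sum_congr rfl fun s _ => ?_
        rw [← h s, Finset.mul_sum]
        refine Finset.sum_congr rfl fun t _ => ?_
        split <;> simp

lemma my_sum_fiber2 {T S : Type*} [Fintype T] [Fintype S] [DecidableEq S]
    (pr : T → S) (π : T → ℝ) (μ : S → ℝ)
    (h : ∀ s, (∑ t, if pr t = s then π t else 0) = μ s) (F : S → S → ℝ) :
    ∑ t, ∑ t', F (pr t) (pr t') * π t * π t' = ∑ s, ∑ s', F s s' * μ s * μ s' := by
  calc ∑ t, ∑ t', F (pr t) (pr t') * π t * π t'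
      = ∑ t, (fun s => ∑ s', F s s' * μ s') (pr t) * π t := by
        refine Finset.sum_congr rfl fun t _ => ?_
        have e1 : ∑ t', F (pr t) (pr t') * π t * π t'
            = (∑ t', F (pr t) (pr t') * π t') * π t := by
          rw [Finset.sum_mul]; exact Finset.sum_congr rfl fun t' _ => by ring
        rw [e1, my_sum_fiber pr π μ h (F (pr t))]
    _ = ∑ s, (∑ s', F s s' * μ s') * μ s := by simpa using my_sum_fiber pr π μ h (fun s => ∑ s', F s s' * μ s')
    _ = ∑ s, ∑ s', F s s' * μ s * μ s' := by
        refine Finset.sum_congr rfl fun s _ => ?_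
        rw [Finset.sum_mul]; exact Finset.sum_congr rfl fun s' _ => by ring

lemma my_sum_ite_pair {α β : Type*} [Fintype α] [Fintype β] [DecidableEq α] [DecidableEq β]
    (a : α) (b : β) (M : α → β → ℝ) :
    ∑ x, ∑ y, (if (x, y) = (a, b) then M x y else 0) = M a b := by
  rw [Finset.sum_eq_single a]
  · rw [Finset.sum_eq_single b]
    · simp
    · intro y _ hy; simp [hy]
    · simp
  · intro x _ hx
    apply Finset.sum_eq_zero
    intro y _
    simp [Prod.ext_iff, hx]
  · simp

lemma my_prod_sum_eq {A C : Type*} [Fintype A] [Fintype C] (F : A → C → A → C → ℝ) :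
    ∑ s : A × C, ∑ s' : A × C, F s.1 s.2 s'.1 s'.2 = ∑ a, ∑ c, ∑ a', ∑ c', F a c a' c' := by
  rw [Fintype.sum_prod_type]
  exact Finset.sum_congr rfl fun a _ => Finset.sum_congr rfl fun c _ => by
    rw [Fintype.sum_prod_type]

lemma my_glue_GW {A B C : Type*} [Fintype A] [Fintype B] [Fintype C]
    (dA : A → A → ℝ) (dB : B → B → ℝ) (dC : C → C → ℝ) {μB : B → ℝ}
    (hB : ∀ b, 0 < μB b)
    {μ1 : A → B → ℝ} {μ2 : B → C → ℝ}
    (h1n : ∀ a b, 0 ≤ μ1 a b) (h2n : ∀ b c, 0 ≤ μ2 b c)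
    (hm1 : ∀ b, ∑ a, μ1 a b = μB b) (hm2 : ∀ b, ∑ c, μ2 b c = μB b) :
    Real.sqrt (GWLoss dA dC (fun a c => ∑ b, μ1 a b * μ2 b c / μB b)) ≤
      Real.sqrt (GWLoss dA dB μ1) + Real.sqrt (GWLoss dB dC μ2) := by
  classical
  set π : A × B × C → ℝ := fun t => μ1 t.1 t.2.1 * μ2 t.2.1 t.2.2 / μB t.2.1 with hπ
  have hπn : ∀ t, 0 ≤ π t := fun t =>
    div_nonneg (mul_nonneg (h1n _ _) (h2n _ _)) (hB _).le
  -- marginals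
  have hmAB : ∀ a b, ∑ c, π (a, b, c) = μ1 a b := by
    intro a b
    simp only [hπ]
    rw [← Finset.sum_div, ← Finset.mul_sum, hm2 b, mul_div_assoc,
      div_self (hB b).ne', mul_one]
  have hmBC : ∀ b c, ∑ a, π (a, b, c) = μ2 b c := by
    intro b c
    simp only [hπ]
    rw [← Finset.sum_div, ← Finset.sum_mul, hm1 b, mul_comm, mul_div_assoc,
      div_self (hB b).ne', mul_one]
  -- fiber conditions
  have hfibAB : ∀ s : A × B, (∑ t : A × B × C, if (t.1, t.2.1) = s then π t else 0)
      = μ1 s.1 s.2 := by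
    rintro ⟨a, b⟩
    rw [Fintype.sum_prod_type]
    simp only [Fintype.sum_prod_type]
    have : ∀ x : A, ∀ y : B, (∑ c : C, if (x, y) = (a, b) then π (x, y, c) else 0)
        = (if (x, y) = (a, b) then ∑ c : C, π (x, y, c) else 0) := by
      intro x y; by_cases h : (x, y) = (a, b) <;> simp [h]
    simp only [this]
    rw [my_sum_ite_pair a b (fun x y => ∑ c, π (x, y, c))]
    exact hmAB a b
  have hfibBC : ∀ s : B × C, (∑ t : A × B × C, if (t.2.1, t.2.2) = s then π t else 0)
      = μ2 s.1 s.2 := by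
    rintro ⟨b, c⟩
    rw [Fintype.sum_prod_type]
    have : ∀ x : A, (∑ u : B × C, if (u.1, u.2) = (b, c) then π (x, u) else 0)
        = π (x, b, c) := by
      intro x
      simp only [Prod.mk.eta]
      rw [Finset.sum_ite_eq' Finset.univ (b, c) (fun u => π (x, u))]
      simp
    simp only [this]
    exact hmBC b c
  have hfibAC : ∀ s : A × C, (∑ t : A × B × C, if (t.1, t.2.2) = s then π t else 0)
      = ∑ b, μ1 s.1 b * μ2 b s.2 / μB b := by
    rintro ⟨a, c⟩
    rw [Fintype.sum_prod_type]
    simp only [Fintype.sum_prod_type]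
    have swap : ∀ x : A, (∑ y : B, ∑ z : C, if (x, z) = (a, c) then π (x, y, z) else 0)
        = ∑ z : C, if (x, z) = (a, c) then ∑ y : B, π (x, y, z) else 0 := by
      intro x
      rw [Finset.sum_comm]
      refine Finset.sum_congr rfl fun z _ => ?_
      by_cases h : (x, z) = (a, c) <;> simp [h]
    simp only [swap]
    rw [my_sum_ite_pair a c (fun x z => ∑ y : B, π (x, y, z))]
  -- Minkowski setup
  set f : (A × B × C) × (A × B × C) → ℝ :=
    fun u => dA u.1.1 u.2.1 - dB u.1.2.1 u.2.2.1 with hf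
  set g : (A × B × C) × (A × B × C) → ℝ :=
    fun u => dB u.1.2.1 u.2.2.1 - dC u.1.2.2 u.2.2.2 with hg
  set w : (A × B × C) × (A × B × C) → ℝ := fun u => π u.1 * π u.2 with hw
  have hwn : ∀ u, 0 ≤ w u := fun u => mul_nonneg (hπn _) (hπn _)
  have E1 : ∑ u, (f u + g u)^2 * w u
      = GWLoss dA dC (fun a c => ∑ b, μ1 a b * μ2 b c / μB b) := by
    have key := my_sum_fiber2 (fun t : A × B × C => (t.1, t.2.2)) π
      (fun s : A × C => ∑ b, μ1 s.1 b * μ2 b s.2 / μB b) hfibAC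
      (fun s s' => (dA s.1 s'.1 - dC s.2 s'.2)^2)
    have e2 := my_prod_sum_eq (fun a c a' c' => (dA a a' - dC c c')^2
      * (∑ b, μ1 a b * μ2 b c / μB b) * (∑ b, μ1 a' b * μ2 b c' / μB b))
    calc ∑ u, (f u + g u)^2 * w u
        = ∑ t : A × B × C, ∑ t' : A × B × C,
            (dA t.1 t'.1 - dC t.2.2 t'.2.2)^2 * π t * π t' := by
          rw [Fintype.sum_prod_type]
          exact Finset.sum_congr rfl fun t _ => Finset.sum_congr rfl fun t' _ => by
            simp only [hf, hg, hw]; ring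
      _ = ∑ s : A × C, ∑ s' : A × C, (dA s.1 s'.1 - dC s.2 s'.2)^2
            * (∑ b, μ1 s.1 b * μ2 b s.2 / μB b) * (∑ b, μ1 s'.1 b * μ2 b s'.2 / μB b) := key
      _ = GWLoss dA dC (fun a c => ∑ b, μ1 a b * μ2 b c / μB b) := e2
  have E2 : ∑ u, (f u)^2 * w u = GWLoss dA dB μ1 := by
    have key := my_sum_fiber2 (fun t : A × B × C => (t.1, t.2.1)) π
      (fun s : A × B => μ1 s.1 s.2) hfibAB
      (fun s s' => (dA s.1 s'.1 - dB s.2 s'.2)^2)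
    have e2 := my_prod_sum_eq (fun a b a' b' => (dA a a' - dB b b')^2 * μ1 a b * μ1 a' b')
    calc ∑ u, (f u)^2 * w u
        = ∑ t : A × B × C, ∑ t' : A × B × C,
            (dA t.1 t'.1 - dB t.2.1 t'.2.1)^2 * π t * π t' := by
          rw [Fintype.sum_prod_type]
          exact Finset.sum_congr rfl fun t _ => Finset.sum_congr rfl fun t' _ => by
            simp only [hf, hw]; ring
      _ = ∑ s : A × B, ∑ s' : A × B, (dA s.1 s'.1 - dB s.2 s'.2)^2 * μ1 s.1 s.2 * μ1 s'.1 s'.2 := key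
      _ = GWLoss dA dB μ1 := e2
  have E3 : ∑ u, (g u)^2 * w u = GWLoss dB dC μ2 := by
    have key := my_sum_fiber2 (fun t : A × B × C => (t.2.1, t.2.2)) π
      (fun s : B × C => μ2 s.1 s.2) hfibBC
      (fun s s' => (dB s.1 s'.1 - dC s.2 s'.2)^2)
    have e2 := my_prod_sum_eq (fun b c b' c' => (dB b b' - dC c c')^2 * μ2 b c * μ2 b' c')
    calc ∑ u, (g u)^2 * w u
        = ∑ t : A × B × C, ∑ t' : A × B × C,
            (dB t.2.1 t'.2.1 - dC t.2.2 t'.2.2)^2 * π t * π t' := by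
          rw [Fintype.sum_prod_type]
          exact Finset.sum_congr rfl fun t _ => Finset.sum_congr rfl fun t' _ => by
            simp only [hg, hw]; ring
      _ = ∑ s : B × C, ∑ s' : B × C, (dB s.1 s'.1 - dC s.2 s'.2)^2 * μ2 s.1 s.2 * μ2 s'.1 s'.2 := key
      _ = GWLoss dB dC μ2 := e2
  have := my_sqrt_add_le f g w hwn
  rw [E1, E2, E3] at this
  exact this

-- ### block lemmas

lemma blockMass_pos {X : Type*} [Fintype X] {μX : X → ℝ} (hpos : ∀ x, 0 < μX x)
    {m : ℕ} (P : PointedPartition X m) (p : Fin m) : 0 < blockMass μX P p := by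
  have h1 : (if P.part (P.rep p) = p then μX (P.rep p) else 0) = μX (P.rep p) := by
    rw [if_pos (P.part_rep p)]
  calc (0:ℝ) < μX (P.rep p) := hpos _
    _ = if P.part (P.rep p) = p then μX (P.rep p) else 0 := h1.symm
    _ ≤ blockMass μX P p := Finset.single_le_sum
        (f := fun x => if P.part x = p then μX x else 0)
        (fun x _ => by split <;> [exact (hpos x).le; exact le_refl 0]) (mem_univ _)

lemma blockMass_nonneg {X : Type*} [Fintype X] {μX : X → ℝ} (hpos : ∀ x, 0 ≤ μX x)
    {m : ℕ} (P : PointedPartition X m) (p : Fin m) : 0 ≤ blockMass μX P p :=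
  Finset.sum_nonneg fun x _ => by split <;> [exact hpos x; exact le_refl 0]

lemma blockMeasure_nonneg {X : Type*} [Fintype X] {μX : X → ℝ} (hpos : ∀ x, 0 ≤ μX x)
    {m : ℕ} (P : PointedPartition X m) (p : Fin m) (x : X) :
    0 ≤ blockMeasure μX P p x := by
  unfold blockMeasure
  split
  · exact div_nonneg (hpos x) (blockMass_nonneg hpos P p)
  · exact le_refl 0

lemma sum_blockMeasure {X : Type*} [Fintype X] {μX : X → ℝ} (hpos : ∀ x, 0 < μX x)
    {m : ℕ} (P : PointedPartition X m) (p : Fin m) :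
    ∑ x, blockMeasure μX P p x = 1 := by
  unfold blockMeasure
  have : ∑ x, (if P.part x = p then μX x / blockMass μX P p else 0)
      = (∑ x, if P.part x = p then μX x else 0) / blockMass μX P p := by
    rw [Finset.sum_div]
    exact Finset.sum_congr rfl fun x _ => by split <;> simp
  rw [this]
  exact div_self (blockMass_pos hpos P p).ne'

lemma blockMeasure_rep_pos {X : Type*} [Fintype X] {μX : X → ℝ} (hpos : ∀ x, 0 < μX x)
    {m : ℕ} (P : PointedPartition X m) (p : Fin m) :
    0 < blockMeasure μX P p (P.rep p) := by
  unfold blockMeasure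
  rw [if_pos (P.part_rep p)]
  exact div_pos (hpos _) (blockMass_pos hpos P p)

lemma blockMeasure_mul_mass {X : Type*} [Fintype X] {μX : X → ℝ} (hpos : ∀ x, 0 < μX x)
    {m : ℕ} (P : PointedPartition X m) (p : Fin m) (x : X) :
    blockMeasure μX P p x * blockMass μX P p = if P.part x = p then μX x else 0 := by
  unfold blockMeasure
  split
  · exact div_mul_cancel₀ _ (blockMass_pos hpos P p).ne'
  · exact zero_mul _

lemma sum_ite_part {X : Type*} [Fintype X] (μX : X → ℝ) {m : ℕ}
    (P : PointedPartition X m) (x : X) :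
    ∑ p, (if P.part x = p then μX x else 0) = μX x := by
  rw [Finset.sum_ite_eq Finset.univ (P.part x) (fun _ => μX x)]
  simp

-- coupling zero lemmas
lemma coupling_zero_right {A B : Type*} [Fintype A] [Fintype B]
    {μA : A → ℝ} {μB : B → ℝ} {μ : A → B → ℝ} (h : IsCoupling μA μB μ)
    {b : B} (hb : μB b = 0) (a : A) : μ a b = 0 := by
  have := (Finset.sum_eq_zero_iff_of_nonneg (fun a _ => h.1 a b)).1
    (by rw [h.2.2 b, hb])
  exact this a (mem_univ a)

lemma coupling_zero_left {A B : Type*} [Fintype A] [Fintype B]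
    {μA : A → ℝ} {μB : B → ℝ} {μ : A → B → ℝ} (h : IsCoupling μA μB μ)
    {a : A} (ha : μA a = 0) (b : B) : μ a b = 0 := by
  have := (Finset.sum_eq_zero_iff_of_nonneg (fun b _ => h.1 a b)).1
    (by rw [h.2.1 a, ha])
  exact this b (mem_univ b)

-- gluing of plain couplings
lemma glue_coupling {A B C : Type*} [Fintype A] [Fintype B] [Fintype C]
    {μA : A → ℝ} {μB : B → ℝ} {μC : C → ℝ} {μ1 : A → B → ℝ} {μ2 : B → C → ℝ}
    (h1 : IsCoupling μA μB μ1) (h2 : IsCoupling μB μC μ2) :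
    IsCoupling μA μC (fun a c => ∑ b, μ1 a b * μ2 b c / μB b) := by
  have hBnn : ∀ b, 0 ≤ μB b := fun b => by
    rw [← h1.2.2 b]; exact Finset.sum_nonneg fun a _ => h1.1 a b
  have key1 : ∀ a b, ∑ c, μ1 a b * μ2 b c / μB b = μ1 a b := by
    intro a b
    by_cases hb : μB b = 0
    · simp [coupling_zero_left h2 hb, coupling_zero_right h1 hb]
    · rw [← Finset.sum_div, ← Finset.mul_sum, h2.2.1 b, mul_div_assoc, div_self hb, mul_one]
  have key2 : ∀ b c, ∑ a, μ1 a b * μ2 b c / μB b = μ2 b c := by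
    intro b c
    by_cases hb : μB b = 0
    · simp [coupling_zero_left h2 hb, coupling_zero_right h1 hb]
    · rw [← Finset.sum_div, ← Finset.sum_mul, h1.2.2 b, mul_comm, mul_div_assoc,
        div_self hb, mul_one]
  refine ⟨fun a c => Finset.sum_nonneg fun b _ =>
    div_nonneg (mul_nonneg (h1.1 a b) (h2.1 b c)) (hBnn b), ?_, ?_⟩
  · intro a
    rw [Finset.sum_comm]
    calc ∑ b, ∑ c, μ1 a b * μ2 b c / μB b = ∑ b, μ1 a b := by
          exact Finset.sum_congr rfl fun b _ => key1 a b
      _ = μA a := h1.2.1 a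
  · intro c
    rw [Finset.sum_comm]
    calc ∑ b, ∑ a, μ1 a b * μ2 b c / μB b = ∑ b, μ2 b c := by
          exact Finset.sum_congr rfl fun b _ => key2 b c
      _ = μC c := h2.2.2 c

-- product coupling
lemma prod_coupling {A B : Type*} [Fintype A] [Fintype B] {f : A → ℝ} {g : B → ℝ}
    (hf : ∀ a, 0 ≤ f a) (hg : ∀ b, 0 ≤ g b) (hf1 : ∑ a, f a = 1) (hg1 : ∑ b, g b = 1) :
    IsCoupling f g (fun a b => f a * g b) := by
  refine ⟨fun a b => mul_nonneg (hf a) (hg b), ?_, ?_⟩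
  · intro a; rw [← Finset.mul_sum, hg1, mul_one]
  · intro b; rw [← Finset.sum_mul, hf1, one_mul]

-- quantization couplings are couplings
lemma quant_isCoupling {X Y : Type*} [Fintype X] [Fintype Y] {m : ℕ}
    {μX : X → ℝ} {μY : Y → ℝ}
    (hXpos : ∀ x, 0 < μX x) (hYpos : ∀ y, 0 < μY y)
    {PX : PointedPartition X m} {PY : PointedPartition Y m} {μ : X → Y → ℝ}
    (h : IsQuantCoupling μX μY PX PY μ) : IsCoupling μX μY μ := by
  obtain ⟨μm, ν, hμm, hν, _, hrep⟩ := h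
  have hnn : ∀ x y, 0 ≤ μ x y := by
    intro x y
    rw [hrep x y]
    exact Finset.sum_nonneg fun p _ => Finset.sum_nonneg fun q _ =>
      mul_nonneg (hμm.1 p q) ((hν p q).1 x y)
  refine ⟨hnn, ?_, ?_⟩
  · intro x
    calc ∑ y, μ x y = ∑ y, ∑ p, ∑ q, μm p q * ν p q x y :=
          Finset.sum_congr rfl fun y _ => hrep x y
      _ = ∑ p, ∑ q, μm p q * ∑ y, ν p q x y := by
          rw [Finset.sum_comm]
          refine Finset.sum_congr rfl fun p _ => ?_
          rw [Finset.sum_comm]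
          exact Finset.sum_congr rfl fun q _ => by rw [Finset.mul_sum]
      _ = ∑ p, ∑ q, μm p q * blockMeasure μX PX p x := by
          exact Finset.sum_congr rfl fun p _ => Finset.sum_congr rfl fun q _ => by
            rw [(hν p q).2.1 x]
      _ = ∑ p, blockMeasure μX PX p x * blockMass μX PX p := by
          refine Finset.sum_congr rfl fun p _ => ?_
          rw [← Finset.sum_mul]
          rw [show ∑ q, μm p q = blockMass μX PX p from hμm.2.1 p]
          ring
      _ = ∑ p, (if PX.part x = p then μX x else 0) :=
          Finset.sum_congr rfl fun p _ => blockMeasure_mul_mass hXpos PX p x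
      _ = μX x := sum_ite_part μX PX x
  · intro y
    calc ∑ x, μ x y = ∑ x, ∑ p, ∑ q, μm p q * ν p q x y :=
          Finset.sum_congr rfl fun x _ => hrep x y
      _ = ∑ p, ∑ q, μm p q * ∑ x, ν p q x y := by
          rw [Finset.sum_comm]
          refine Finset.sum_congr rfl fun p _ => ?_
          rw [Finset.sum_comm]
          exact Finset.sum_congr rfl fun q _ => by rw [Finset.mul_sum]
      _ = ∑ p, ∑ q, μm p q * blockMeasure μY PY q y := by
          exact Finset.sum_congr rfl fun p _ => Finset.sum_congr rfl fun q _ => by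
            rw [(hν p q).2.2 y]
      _ = ∑ q, blockMeasure μY PY q y * blockMass μY PY q := by
          rw [Finset.sum_comm]
          refine Finset.sum_congr rfl fun q _ => ?_
          rw [← Finset.sum_mul]
          rw [show ∑ p, μm p q = blockMass μY PY q from hμm.2.2 q]
          ring
      _ = ∑ q, (if PY.part y = q then μY y else 0) :=
          Finset.sum_congr rfl fun q _ => blockMeasure_mul_mass hYpos PY q y
      _ = μY y := sum_ite_part μY PY y

-- existence of a quantization coupling
lemma exists_quant {X Z : Type*} [Fintype X] [Fintype Z] {m : ℕ}
    {μX : X → ℝ} {μZ : Z → ℝ} (hX : IsProb μX) (hZ : IsProb μZ)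
    (hXpos : ∀ x, 0 < μX x) (hZpos : ∀ z, 0 < μZ z)
    (PX : PointedPartition X m) (PZ : PointedPartition Z m) :
    ∃ μ, IsQuantCoupling μX μZ PX PZ μ := by
  have hsumX : ∑ p, blockMass μX PX p = 1 := by
    rw [show ∑ p, blockMass μX PX p = ∑ p, ∑ x, (if PX.part x = p then μX x else 0) from rfl,
      Finset.sum_comm]
    calc ∑ x, ∑ p, (if PX.part x = p then μX x else 0) = ∑ x, μX x :=
        Finset.sum_congr rfl fun x _ => sum_ite_part μX PX x
      _ = 1 := hX.2
  have hsumZ : ∑ q, blockMass μZ PZ q = 1 := by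
    rw [show ∑ q, blockMass μZ PZ q = ∑ q, ∑ z, (if PZ.part z = q then μZ z else 0) from rfl,
      Finset.sum_comm]
    calc ∑ z, ∑ q, (if PZ.part z = q then μZ z else 0) = ∑ z, μZ z :=
        Finset.sum_congr rfl fun z _ => sum_ite_part μZ PZ z
      _ = 1 := hZ.2
  refine ⟨fun x z => ∑ p, ∑ q, (blockMass μX PX p * blockMass μZ PZ q) *
      (blockMeasure μX PX p x * blockMeasure μZ PZ q z),
    fun p q => blockMass μX PX p * blockMass μZ PZ q,
    fun p q x z => blockMeasure μX PX p x * blockMeasure μZ PZ q z, ?_, ?_, ?_, ?_⟩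
  · exact prod_coupling (fun p => blockMass_nonneg (fun x => (hXpos x).le) PX p)
      (fun q => blockMass_nonneg (fun z => (hZpos z).le) PZ q) hsumX hsumZ
  · intro p q
    exact prod_coupling (fun x => blockMeasure_nonneg (fun x => (hXpos x).le) PX p x)
      (fun z => blockMeasure_nonneg (fun z => (hZpos z).le) PZ q z)
      (sum_blockMeasure hXpos PX p) (sum_blockMeasure hZpos PZ q)
  · intro p q
    exact mul_pos (blockMeasure_rep_pos hXpos PX p) (blockMeasure_rep_pos hZpos PZ q)
  · intro x z; rfl

lemma my_sum_comm4 {α β γ δ : Type*} [Fintype α] [Fintype β] [Fintype γ] [Fintype δ]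
    (f : α → β → γ → δ → ℝ) :
    ∑ a, ∑ b, ∑ c, ∑ d, f a b c d = ∑ b, ∑ d, ∑ c, ∑ a, f a b c d :=
  calc ∑ a, ∑ b, ∑ c, ∑ d, f a b c d
      = ∑ b, ∑ a, ∑ c, ∑ d, f a b c d := Finset.sum_comm
    _ = ∑ b, ∑ c, ∑ a, ∑ d, f a b c d :=
        Finset.sum_congr rfl fun b _ => Finset.sum_comm
    _ = ∑ b, ∑ c, ∑ d, ∑ a, f a b c d :=
        Finset.sum_congr rfl fun b _ => Finset.sum_congr rfl fun c _ => Finset.sum_comm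
    _ = ∑ b, ∑ d, ∑ c, ∑ a, f a b c d :=
        Finset.sum_congr rfl fun b _ => Finset.sum_comm

lemma glue_quant {X Y Z : Type*} [Fintype X] [Fintype Y] [Fintype Z] {m : ℕ}
    {μX : X → ℝ} {μY : Y → ℝ} {μZ : Z → ℝ}
    (hXpos : ∀ x, 0 < μX x) (hYpos : ∀ y, 0 < μY y) (hZpos : ∀ z, 0 < μZ z)
    {PX : PointedPartition X m} {PY : PointedPartition Y m} {PZ : PointedPartition Z m}
    {μ1 : X → Y → ℝ} {μ2 : Y → Z → ℝ}
    (h1 : IsQuantCoupling μX μY PX PY μ1) (h2 : IsQuantCoupling μY μZ PY PZ μ2) :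
    IsQuantCoupling μX μZ PX PZ (fun x z => ∑ y, μ1 x y * μ2 y z / μY y) := by
  classical
  obtain ⟨μm1, ν1, hμm1, hν1, hpos1, hrep1⟩ := h1
  obtain ⟨μm2, ν2, hμm2, hν2, hpos2, hrep2⟩ := h2
  set w : Fin m → Fin m → Fin m → ℝ :=
    fun p q r => μm1 p q * μm2 q r / blockMass μY PY q with hw
  have hwn : ∀ p q r, 0 ≤ w p q r := fun p q r =>
    div_nonneg (mul_nonneg (hμm1.1 p q) (hμm2.1 q r)) (blockMass_pos hYpos PY q).le
  set μm : Fin m → Fin m → ℝ := fun p r => ∑ q, w p q r with hμm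
  have hμmC : IsCoupling (blockMass μX PX) (blockMass μZ PZ) μm :=
    glue_coupling hμm1 hμm2
  have hμmn : ∀ p r, 0 ≤ μm p r := fun p r => Finset.sum_nonneg fun q _ => hwn p q r
  set νg : Fin m → Fin m → Fin m → X → Z → ℝ :=
    fun p q r x z => ∑ y, ν1 p q x y * ν2 q r y z / blockMeasure μY PY q y with hνg
  have hνgC : ∀ p q r, IsCoupling (blockMeasure μX PX p) (blockMeasure μZ PZ r) (νg p q r) :=
    fun p q r => glue_coupling (hν1 p q) (hν2 q r)
  have hνgpos : ∀ p q r, 0 < νg p q r (PX.rep p) (PZ.rep r) := by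
    intro p q r
    apply Finset.sum_pos'
    · intro y _
      exact div_nonneg (mul_nonneg ((hν1 p q).1 _ _) ((hν2 q r).1 _ _))
        (blockMeasure_nonneg (fun y => (hYpos y).le) PY q y)
    · exact ⟨PY.rep q, mem_univ _,
        div_pos (mul_pos (hpos1 p q) (hpos2 q r)) (blockMeasure_rep_pos hYpos PY q)⟩
  set ν : Fin m → Fin m → X → Z → ℝ := fun p r =>
    if μm p r = 0 then (fun x z => blockMeasure μX PX p x * blockMeasure μZ PZ r z)
    else fun x z => (∑ q, w p q r * νg p q r x z) / μm p r with hν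
  have hterm : ∀ p r x z, μm p r * ν p r x z = ∑ q, w p q r * νg p q r x z := by
    intro p r x z
    by_cases h : μm p r = 0
    · have hq0 : ∀ q, w p q r = 0 := fun q =>
        (Finset.sum_eq_zero_iff_of_nonneg (fun q _ => hwn p q r)).1 h q (mem_univ q)
      rw [h, zero_mul]
      symm
      exact Finset.sum_eq_zero fun q _ => by rw [hq0 q, zero_mul]
    · simp only [hν, if_neg h]
      rw [mul_comm, div_mul_cancel₀ _ h]
  have hνC : ∀ p r, IsCoupling (blockMeasure μX PX p) (blockMeasure μZ PZ r) (ν p r) := by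
    intro p r
    by_cases h : μm p r = 0
    · simp only [hν, if_pos h]
      exact prod_coupling (fun x => blockMeasure_nonneg (fun x => (hXpos x).le) PX p x)
        (fun z => blockMeasure_nonneg (fun z => (hZpos z).le) PZ r z)
        (sum_blockMeasure hXpos PX p) (sum_blockMeasure hZpos PZ r)
    · simp only [hν, if_neg h]
      refine ⟨fun x z => div_nonneg (Finset.sum_nonneg fun q _ =>
        mul_nonneg (hwn p q r) ((hνgC p q r).1 x z)) (hμmn p r), ?_, ?_⟩
      · intro x
        rw [← Finset.sum_div]
        have e : ∑ z, ∑ q, w p q r * νg p q r x z = μm p r * blockMeasure μX PX p x := by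
          rw [Finset.sum_comm]
          calc ∑ q, ∑ z, w p q r * νg p q r x z
              = ∑ q, w p q r * blockMeasure μX PX p x := Finset.sum_congr rfl fun q _ => by
                rw [← Finset.mul_sum, (hνgC p q r).2.1 x]
            _ = μm p r * blockMeasure μX PX p x := by rw [← Finset.sum_mul]
        rw [e, mul_comm, mul_div_assoc, div_self h, mul_one]
      · intro z
        rw [← Finset.sum_div]
        have e : ∑ x, ∑ q, w p q r * νg p q r x z = μm p r * blockMeasure μZ PZ r z := by
          rw [Finset.sum_comm]
          calc ∑ q, ∑ x, w p q r * νg p q r x z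
              = ∑ q, w p q r * blockMeasure μZ PZ r z := Finset.sum_congr rfl fun q _ => by
                rw [← Finset.mul_sum, (hνgC p q r).2.2 z]
            _ = μm p r * blockMeasure μZ PZ r z := by rw [← Finset.sum_mul]
        rw [e, mul_comm, mul_div_assoc, div_self h, mul_one]
  have hνpos : ∀ p r, 0 < ν p r (PX.rep p) (PZ.rep r) := by
    intro p r
    by_cases h : μm p r = 0
    · simp only [hν, if_pos h]
      exact mul_pos (blockMeasure_rep_pos hXpos PX p) (blockMeasure_rep_pos hZpos PZ r)
    · simp only [hν, if_neg h]
      have hμmpos : 0 < μm p r := lt_of_le_of_ne (hμmn p r) (Ne.symm h)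
      apply div_pos _ hμmpos
      have hex : ∃ q, w p q r ≠ 0 := by
        by_contra hc
        push_neg at hc
        exact h (Finset.sum_eq_zero fun q _ => hc q)
      obtain ⟨q0, hq0⟩ := hex
      exact Finset.sum_pos' (fun q _ => mul_nonneg (hwn p q r) ((hνgC p q r).1 _ _))
        ⟨q0, mem_univ _, mul_pos (lt_of_le_of_ne (hwn p q0 r) (Ne.symm hq0)) (hνgpos p q0 r)⟩
  refine ⟨μm, ν, hμmC, hνC, hνpos, ?_⟩
  intro x z
  -- support lemmas
  have hs1 : ∀ p q y, PY.part y ≠ q → ν1 p q x y = 0 := by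
    intro p q y hy
    exact coupling_zero_right (hν1 p q) (by unfold blockMeasure; rw [if_neg hy]) x
  have hs2 : ∀ q r y, PY.part y ≠ q → ν2 q r y z = 0 := by
    intro q r y hy
    exact coupling_zero_left (hν2 q r) (by unfold blockMeasure; rw [if_neg hy]) z
  set G : Y → Fin m → Fin m → Fin m → ℝ := fun y p q r =>
    w p q r * (ν1 p q x y * ν2 q r y z / blockMeasure μY PY q y) with hG
  have hGsup : ∀ y p q r, PY.part y ≠ q → G y p q r = 0 := by
    intro y p q r hy
    simp only [hG]
    rw [hs1 p q y hy, zero_mul, zero_div, mul_zero]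
  have hpoint : ∀ y, μ1 x y * μ2 y z / μY y = ∑ p, ∑ q, ∑ r, G y p q r := by
    intro y
    set q0 := PY.part y with hq0
    have e1 : μ1 x y = ∑ p, μm1 p q0 * ν1 p q0 x y := by
      rw [hrep1 x y]
      refine Finset.sum_congr rfl fun p _ => ?_
      rw [Finset.sum_eq_single q0]
      · intro q _ hq
        rw [hs1 p q y (hq0 ▸ Ne.symm hq), mul_zero]
      · intro hh
        exact absurd (mem_univ q0) hh
    have e2 : μ2 y z = ∑ r, μm2 q0 r * ν2 q0 r y z := by
      rw [hrep2 y z]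
      rw [Finset.sum_eq_single q0]
      · intro q _ hq
        exact Finset.sum_eq_zero fun r _ => by rw [hs2 q r y (hq0 ▸ Ne.symm hq), mul_zero]
      · intro hh
        exact absurd (mem_univ q0) hh
    have e3 : ∑ p, ∑ q, ∑ r, G y p q r = ∑ p, ∑ r, G y p q0 r := by
      refine Finset.sum_congr rfl fun p _ => ?_
      rw [Finset.sum_eq_single q0]
      · intro q _ hq
        exact Finset.sum_eq_zero fun r _ => hGsup y p q r (hq0 ▸ Ne.symm hq)
      · intro hh
        exact absurd (mem_univ q0) hh
    rw [e3, e1, e2]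
    have hbm : blockMeasure μY PY q0 y = μY y / blockMass μY PY q0 := by
      unfold blockMeasure
      rw [if_pos hq0.symm]
    calc (∑ p, μm1 p q0 * ν1 p q0 x y) * (∑ r, μm2 q0 r * ν2 q0 r y z) / μY y
        = ∑ p, ∑ r, (μm1 p q0 * ν1 p q0 x y) * (μm2 q0 r * ν2 q0 r y z) / μY y := by
          rw [Finset.sum_mul_sum, Finset.sum_div]
          exact Finset.sum_congr rfl fun p _ => Finset.sum_div _ _ _
      _ = ∑ p, ∑ r, G y p q0 r := by
          refine Finset.sum_congr rfl fun p _ => Finset.sum_congr rfl fun r _ => ?_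
          simp only [hG, hw, hbm]
          have hm0 : blockMass μY PY q0 ≠ 0 := (blockMass_pos hYpos PY q0).ne'
          have hy0 : μY y ≠ 0 := (hYpos y).ne'
          field_simp
  calc ∑ y, μ1 x y * μ2 y z / μY y = ∑ y, ∑ p, ∑ q, ∑ r, G y p q r :=
        Finset.sum_congr rfl fun y _ => hpoint y
    _ = ∑ p, ∑ r, ∑ q, ∑ y, G y p q r := my_sum_comm4 G
    _ = ∑ p, ∑ r, μm p r * ν p r x z := by
        refine Finset.sum_congr rfl fun p _ => Finset.sum_congr rfl fun r _ => ?_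
        rw [hterm p r x z]
        refine Finset.sum_congr rfl fun q _ => ?_
        simp only [hG, hνg]
        rw [← Finset.mul_sum]

end Helpers

/-- quantized GW distance satisfies the triangle inequality
(for fully supported probability measures). -/
theorem dqGW_triangle
    {X Y Z : Type*} [Fintype X] [Fintype Y] [Fintype Z]
    [MetricSpace X] [MetricSpace Y] [MetricSpace Z] {m : ℕ}
    (μX : X → ℝ) (μY : Y → ℝ) (μZ : Z → ℝ)
    (hμX : IsProb μX) (hμY : IsProb μY) (hμZ : IsProb μZ)
    (hXpos : ∀ x, 0 < μX x) (hYpos : ∀ y, 0 < μY y) (hZpos : ∀ z, 0 < μZ z)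
    (PX : PointedPartition X m) (PY : PointedPartition Y m) (PZ : PointedPartition Z m) :
    dqGW (fun x x' => dist x x') (fun z z' => dist z z') μX μZ PX PZ ≤
      dqGW (fun x x' => dist x x') (fun y y' => dist y y') μX μY PX PY +
      dqGW (fun y y' => dist y y') (fun z z' => dist z z') μY μZ PY PZ := by
  classical
  have hbdd3 : BddBelow {r : ℝ | ∃ μ, IsQuantCoupling μX μZ PX PZ μ ∧
      r = Real.sqrt (GWLoss (fun x x' => dist x x') (fun z z' => dist z z') μ)} :=
    ⟨0, fun r hr => by obtain ⟨μ, _, rfl⟩ := hr; exact Real.sqrt_nonneg _⟩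
  have hne1 : {r : ℝ | ∃ μ, IsQuantCoupling μX μY PX PY μ ∧
      r = Real.sqrt (GWLoss (fun x x' => dist x x') (fun y y' => dist y y') μ)}.Nonempty := by
    obtain ⟨μ, hμ⟩ := exists_quant hμX hμY hXpos hYpos PX PY
    exact ⟨_, μ, hμ, rfl⟩
  have hne2 : {r : ℝ | ∃ μ, IsQuantCoupling μY μZ PY PZ μ ∧
      r = Real.sqrt (GWLoss (fun y y' => dist y y') (fun z z' => dist z z') μ)}.Nonempty := by
    obtain ⟨μ, hμ⟩ := exists_quant hμY hμZ hYpos hZpos PY PZ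
    exact ⟨_, μ, hμ, rfl⟩
  have main : ∀ μ1, IsQuantCoupling μX μY PX PY μ1 → ∀ μ2, IsQuantCoupling μY μZ PY PZ μ2 →
      dqGW (fun x x' => dist x x') (fun z z' => dist z z') μX μZ PX PZ ≤
        Real.sqrt (GWLoss (fun x x' => dist x x') (fun y y' => dist y y') μ1) +
        Real.sqrt (GWLoss (fun y y' => dist y y') (fun z z' => dist z z') μ2) := by
    intro μ1 hμ1 μ2 hμ2
    have hc1 := quant_isCoupling hXpos hYpos hμ1
    have hc2 := quant_isCoupling hYpos hZpos hμ2
    have hglue := glue_quant hXpos hYpos hZpos hμ1 hμ2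
    have hGW := my_glue_GW (fun x x' => dist x x') (fun y y' => dist y y')
      (fun z z' => dist z z') hYpos hc1.1 hc2.1 (fun y => hc1.2.2 y) (fun y => hc2.2.1 y)
    refine le_trans ?_ hGW
    unfold dqGW
    exact csInf_le hbdd3 ⟨_, hglue, rfl⟩
  have step1 : ∀ μ2, IsQuantCoupling μY μZ PY PZ μ2 →
      dqGW (fun x x' => dist x x') (fun z z' => dist z z') μX μZ PX PZ -
        Real.sqrt (GWLoss (fun y y' => dist y y') (fun z z' => dist z z') μ2) ≤
      dqGW (fun x x' => dist x x') (fun y y' => dist y y') μX μY PX PY := by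
    intro μ2 hμ2
    unfold dqGW
    refine le_csInf hne1 ?_
    rintro a ⟨μ1, hμ1, rfl⟩
    have := main μ1 hμ1 μ2 hμ2
    unfold dqGW at this
    linarith
  have step2 : dqGW (fun x x' => dist x x') (fun z z' => dist z z') μX μZ PX PZ -
      dqGW (fun x x' => dist x x') (fun y y' => dist y y') μX μY PX PY ≤
      dqGW (fun y y' => dist y y') (fun z z' => dist z z') μY μZ PY PZ := by
    unfold dqGW
    refine le_csInf hne2 ?_
    rintro b ⟨μ2, hμ2, rfl⟩
    have := step1 μ2 hμ2
    unfold dqGW at this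
    linarith
  linarith
end

section
/- Let X, Y, Z be finite metric measure spaces with μ_Y fully supported, and let μ^{XY} ∈ C(μ_X, μ_Y) and μ^{YZ} ∈ C(μ_Y, μ_Z) be couplings. Then the glued measure μ^{XZ}(x,z) := Σ_{y ∈ Y} μ^{XY}(x,y) μ^{YZ}(y,z) / μ_Y(y) is a coupling of μ_X and μ_Z, and the Gromov–Wasserstein losses satisfy GW(μ^{XZ})^{1/2} ≤ GW(μ^{XY})^{1/2} + GW(μ^{YZ})^{1/2}. -/
open Finset

section Helpers

open Finset

private lemma weighted_minkowski {I : Type*} [Fintype I] (w f g : I → ℝ)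
    (hw : ∀ i, 0 ≤ w i) :
    Real.sqrt (∑ i, w i * (f i + g i) ^ 2) ≤
      Real.sqrt (∑ i, w i * f i ^ 2) + Real.sqrt (∑ i, w i * g i ^ 2) := by
  let u : EuclideanSpace ℝ I := WithLp.toLp 2 (fun i => Real.sqrt (w i) * f i)
  let v : EuclideanSpace ℝ I := WithLp.toLp 2 (fun i => Real.sqrt (w i) * g i)
  have hu : Real.sqrt (∑ i, w i * f i ^ 2) = ‖u‖ := by
    rw [EuclideanSpace.norm_eq]
    congr 1
    exact Finset.sum_congr rfl fun i _ => by
      rw [Real.norm_eq_abs, sq_abs]; simp only [u, PiLp.toLp_apply]; rw [mul_pow, Real.sq_sqrt (hw i)]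
  have hv : Real.sqrt (∑ i, w i * g i ^ 2) = ‖v‖ := by
    rw [EuclideanSpace.norm_eq]
    congr 1
    exact Finset.sum_congr rfl fun i _ => by
      rw [Real.norm_eq_abs, sq_abs]; simp only [v, PiLp.toLp_apply]; rw [mul_pow, Real.sq_sqrt (hw i)]
  have huv : Real.sqrt (∑ i, w i * (f i + g i) ^ 2) = ‖u + v‖ := by
    rw [EuclideanSpace.norm_eq]
    congr 1
    refine Finset.sum_congr rfl fun i _ => ?_
    have h1 : (u + v) i = Real.sqrt (w i) * (f i + g i) := by
      simp only [u, v, PiLp.add_apply, PiLp.toLp_apply]; ring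
    rw [h1, Real.norm_eq_abs, sq_abs, mul_pow, Real.sq_sqrt (hw i)]
  rw [hu, hv, huv]
  exact norm_add_le u v

private lemma sum_rot3 {A B C : Type*} [Fintype A] [Fintype B] [Fintype C]
    (G : A → B → C → ℝ) :
    ∑ a, ∑ b, ∑ c, G a b c = ∑ b, ∑ c, ∑ a, G a b c := by
  rw [Finset.sum_comm]
  exact Finset.sum_congr rfl fun b _ => Finset.sum_comm

private lemma collapse_z {X Y Z : Type*} [Fintype X] [Fintype Y] [Fintype Z]
    (L : X → Y → Z → ℝ) (μ : X → Y → ℝ)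
    (hμ : ∀ x y, (∑ z, L x y z) = μ x y) (c : X → Y → X → Y → ℝ) :
    (∑ x, ∑ y, ∑ z, ∑ x', ∑ y', ∑ z', L x y z * L x' y' z' * c x y x' y')
      = ∑ x, ∑ y, ∑ x', ∑ y', μ x y * (μ x' y' * c x y x' y') := by
  refine Finset.sum_congr rfl fun x _ => Finset.sum_congr rfl fun y _ => ?_
  calc (∑ z, ∑ x', ∑ y', ∑ z', L x y z * L x' y' z' * c x y x' y')
      = ∑ z, ∑ x', ∑ y', μ x' y' * (L x y z * c x y x' y') := by
        refine Finset.sum_congr rfl fun z _ => Finset.sum_congr rfl fun x' _ =>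
          Finset.sum_congr rfl fun y' _ => ?_
        rw [← hμ x' y', Finset.sum_mul]
        exact Finset.sum_congr rfl fun z' _ => by ring
    _ = ∑ x', ∑ y', ∑ z, μ x' y' * (L x y z * c x y x' y') := sum_rot3 _
    _ = ∑ x', ∑ y', μ x y * (μ x' y' * c x y x' y') := by
        refine Finset.sum_congr rfl fun x' _ => Finset.sum_congr rfl fun y' _ => ?_
        rw [← hμ x y, Finset.sum_mul]
        exact Finset.sum_congr rfl fun z _ => by ring

private lemma collapse_x {X Y Z : Type*} [Fintype X] [Fintype Y] [Fintype Z]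
    (L : X → Y → Z → ℝ) (μ : Y → Z → ℝ)
    (hμ : ∀ y z, (∑ x, L x y z) = μ y z) (c : Y → Z → Y → Z → ℝ) :
    (∑ x, ∑ y, ∑ z, ∑ x', ∑ y', ∑ z', L x y z * L x' y' z' * c y z y' z')
      = ∑ y, ∑ z, ∑ y', ∑ z', μ y z * (μ y' z' * c y z y' z') := by
  calc (∑ x, ∑ y, ∑ z, ∑ x', ∑ y', ∑ z', L x y z * L x' y' z' * c y z y' z')
      = ∑ y, ∑ z, ∑ x, ∑ x', ∑ y', ∑ z', L x y z * L x' y' z' * c y z y' z' :=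
        sum_rot3 _
    _ = ∑ y, ∑ z, ∑ x, ∑ y', ∑ z', ∑ x', L x y z * L x' y' z' * c y z y' z' := by
        refine Finset.sum_congr rfl fun y _ => Finset.sum_congr rfl fun z _ =>
          Finset.sum_congr rfl fun x _ => sum_rot3 _
    _ = ∑ y, ∑ z, ∑ x, ∑ y', ∑ z', μ y' z' * (L x y z * c y z y' z') := by
        refine Finset.sum_congr rfl fun y _ => Finset.sum_congr rfl fun z _ =>
          Finset.sum_congr rfl fun x _ => Finset.sum_congr rfl fun y' _ =>
          Finset.sum_congr rfl fun z' _ => ?_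
        rw [← hμ y' z', Finset.sum_mul]
        exact Finset.sum_congr rfl fun x' _ => by ring
    _ = ∑ y, ∑ z, ∑ y', ∑ z', ∑ x, μ y' z' * (L x y z * c y z y' z') := by
        refine Finset.sum_congr rfl fun y _ => Finset.sum_congr rfl fun z _ =>
          sum_rot3 _
    _ = ∑ y, ∑ z, ∑ y', ∑ z', μ y z * (μ y' z' * c y z y' z') := by
        refine Finset.sum_congr rfl fun y _ => Finset.sum_congr rfl fun z _ =>
          Finset.sum_congr rfl fun y' _ => Finset.sum_congr rfl fun z' _ => ?_
        rw [← hμ y z, Finset.sum_mul]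
        exact Finset.sum_congr rfl fun x _ => by ring

private lemma collapse_y {X Y Z : Type*} [Fintype X] [Fintype Y] [Fintype Z]
    (L : X → Y → Z → ℝ) (c : X → Z → X → Z → ℝ) :
    (∑ x, ∑ y, ∑ z, ∑ x', ∑ y', ∑ z', L x y z * L x' y' z' * c x z x' z')
      = ∑ x, ∑ z, ∑ x', ∑ z',
          (∑ y, L x y z) * ((∑ y', L x' y' z') * c x z x' z') := by
  calc (∑ x, ∑ y, ∑ z, ∑ x', ∑ y', ∑ z', L x y z * L x' y' z' * c x z x' z')
      = ∑ x, ∑ y, ∑ z, ∑ x', ∑ z',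
          (∑ y', L x' y' z') * (L x y z * c x z x' z') := by
        refine Finset.sum_congr rfl fun x _ => Finset.sum_congr rfl fun y _ =>
          Finset.sum_congr rfl fun z _ => Finset.sum_congr rfl fun x' _ => ?_
        rw [Finset.sum_comm]
        refine Finset.sum_congr rfl fun z' _ => ?_
        rw [Finset.sum_mul]
        exact Finset.sum_congr rfl fun y' _ => by ring
    _ = ∑ x, ∑ z, ∑ x', ∑ z', ∑ y,
          (∑ y', L x' y' z') * (L x y z * c x z x' z') := by
        refine Finset.sum_congr rfl fun x _ => ?_
        calc (∑ y, ∑ z, ∑ x', ∑ z', (∑ y', L x' y' z') * (L x y z * c x z x' z'))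
            = ∑ z, ∑ y, ∑ x', ∑ z', (∑ y', L x' y' z') * (L x y z * c x z x' z') :=
              Finset.sum_comm
          _ = ∑ z, ∑ x', ∑ y, ∑ z', (∑ y', L x' y' z') * (L x y z * c x z x' z') :=
              Finset.sum_congr rfl fun z _ => Finset.sum_comm
          _ = ∑ z, ∑ x', ∑ z', ∑ y, (∑ y', L x' y' z') * (L x y z * c x z x' z') :=
              Finset.sum_congr rfl fun z _ => Finset.sum_congr rfl fun x' _ =>
                Finset.sum_comm
    _ = ∑ x, ∑ z, ∑ x', ∑ z',
          (∑ y, L x y z) * ((∑ y', L x' y' z') * c x z x' z') := by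
        refine Finset.sum_congr rfl fun x _ => Finset.sum_congr rfl fun z _ =>
          Finset.sum_congr rfl fun x' _ => Finset.sum_congr rfl fun z' _ => ?_
        rw [Finset.sum_mul]
        exact Finset.sum_congr rfl fun y _ => by ring

private lemma minkowski6 {X Y Z : Type*} [Fintype X] [Fintype Y] [Fintype Z]
    (w f g : X → Y → Z → X → Y → Z → ℝ)
    (hw : ∀ x y z x' y' z', 0 ≤ w x y z x' y' z') :
    Real.sqrt (∑ x, ∑ y, ∑ z, ∑ x', ∑ y', ∑ z', w x y z x' y' z' *
        (f x y z x' y' z' + g x y z x' y' z') ^ 2) ≤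
      Real.sqrt (∑ x, ∑ y, ∑ z, ∑ x', ∑ y', ∑ z',
        w x y z x' y' z' * f x y z x' y' z' ^ 2) +
      Real.sqrt (∑ x, ∑ y, ∑ z, ∑ x', ∑ y', ∑ z',
        w x y z x' y' z' * g x y z x' y' z' ^ 2) := by
  have h := weighted_minkowski (I := X × Y × Z × X × Y × Z)
    (fun s => w s.1 s.2.1 s.2.2.1 s.2.2.2.1 s.2.2.2.2.1 s.2.2.2.2.2)
    (fun s => f s.1 s.2.1 s.2.2.1 s.2.2.2.1 s.2.2.2.2.1 s.2.2.2.2.2)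
    (fun s => g s.1 s.2.1 s.2.2.1 s.2.2.2.1 s.2.2.2.2.1 s.2.2.2.2.2)
    (fun s => hw s.1 s.2.1 s.2.2.1 s.2.2.2.1 s.2.2.2.2.1 s.2.2.2.2.2)
  simpa [Fintype.sum_prod_type] using h

end Helpers

/-- the glued measure is a coupling and square-root GW loss is
subadditive under gluing. -/
theorem glued_coupling_and_sqrt_GWLoss_triangle
    {X Y Z : Type*} [Fintype X] [Fintype Y] [Fintype Z]
    [MetricSpace X] [MetricSpace Y] [MetricSpace Z]
    (μX : X → ℝ) (μY : Y → ℝ) (μZ : Z → ℝ)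
    (hμX : IsProb μX) (hμY : IsProb μY) (hμZ : IsProb μZ)
    (hYpos : ∀ y, 0 < μY y)
    (μXY : X → Y → ℝ) (μYZ : Y → Z → ℝ)
    (hXY : IsCoupling μX μY μXY) (hYZ : IsCoupling μY μZ μYZ) :
    IsCoupling μX μZ (fun x z => ∑ y, μXY x y * μYZ y z / μY y) ∧
    Real.sqrt (GWLoss (fun x x' => dist x x') (fun z z' => dist z z')
        (fun x z => ∑ y, μXY x y * μYZ y z / μY y)) ≤
      Real.sqrt (GWLoss (fun x x' => dist x x') (fun y y' => dist y y') μXY) +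
      Real.sqrt (GWLoss (fun y y' => dist y y') (fun z z' => dist z z') μYZ) := by
  obtain ⟨hXYnn, hXYm1, hXYm2⟩ := hXY
  obtain ⟨hYZnn, hYZm1, hYZm2⟩ := hYZ
  have hLnn : ∀ (x : X) (y : Y) (z : Z), 0 ≤ μXY x y * μYZ y z / μY y :=
    fun x y z => div_nonneg (mul_nonneg (hXYnn x y) (hYZnn y z)) (hYpos y).le
  have hLz : ∀ (x : X) (y : Y), (∑ z, μXY x y * μYZ y z / μY y) = μXY x y := by
    intro x y
    rw [← Finset.sum_div, ← Finset.mul_sum, hYZm1 y,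
      mul_div_cancel_right₀ _ (hYpos y).ne']
  have hLx : ∀ (y : Y) (z : Z), (∑ x, μXY x y * μYZ y z / μY y) = μYZ y z := by
    intro y z
    rw [← Finset.sum_div, ← Finset.sum_mul, hXYm2 y,
      mul_div_cancel_left₀ _ (hYpos y).ne']
  constructor
  · refine ⟨fun x z => Finset.sum_nonneg fun y _ => hLnn x y z, ?_, ?_⟩
    · intro x
      rw [Finset.sum_comm]
      calc (∑ y, ∑ z, μXY x y * μYZ y z / μY y) = ∑ y, μXY x y :=
            Finset.sum_congr rfl fun y _ => hLz x y
        _ = μX x := hXYm1 x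
    · intro z
      rw [Finset.sum_comm]
      calc (∑ y, ∑ x, μXY x y * μYZ y z / μY y) = ∑ y, μYZ y z :=
            Finset.sum_congr rfl fun y _ => hLx y z
        _ = μZ z := hYZm2 z
  · have eA : GWLoss (fun x x' => dist x x') (fun z z' => dist z z')
        (fun x z => ∑ y, μXY x y * μYZ y z / μY y)
        = ∑ x, ∑ y, ∑ z, ∑ x', ∑ y', ∑ z',
            (μXY x y * μYZ y z / μY y) * (μXY x' y' * μYZ y' z' / μY y') *
              ((dist x x' - dist y y') + (dist y y' - dist z z')) ^ 2 := by
      calc GWLoss (fun x x' => dist x x') (fun z z' => dist z z')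
            (fun x z => ∑ y, μXY x y * μYZ y z / μY y)
          = ∑ x, ∑ z, ∑ x', ∑ z', (∑ y, μXY x y * μYZ y z / μY y) *
              ((∑ y', μXY x' y' * μYZ y' z' / μY y') * (dist x x' - dist z z') ^ 2) := by
            simp only [GWLoss]
            refine Finset.sum_congr rfl fun x _ => Finset.sum_congr rfl fun z _ =>
              Finset.sum_congr rfl fun x' _ => Finset.sum_congr rfl fun z' _ => by ring
        _ = ∑ x, ∑ y, ∑ z, ∑ x', ∑ y', ∑ z',
              (μXY x y * μYZ y z / μY y) * (μXY x' y' * μYZ y' z' / μY y') *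
                (dist x x' - dist z z') ^ 2 :=
            (collapse_y (fun x y z => μXY x y * μYZ y z / μY y)
              (fun x z x' z' => (dist x x' - dist z z') ^ 2)).symm
        _ = ∑ x, ∑ y, ∑ z, ∑ x', ∑ y', ∑ z',
              (μXY x y * μYZ y z / μY y) * (μXY x' y' * μYZ y' z' / μY y') *
                ((dist x x' - dist y y') + (dist y y' - dist z z')) ^ 2 := by
            refine Finset.sum_congr rfl fun x _ => Finset.sum_congr rfl fun y _ =>
              Finset.sum_congr rfl fun z _ => Finset.sum_congr rfl fun x' _ =>
              Finset.sum_congr rfl fun y' _ => Finset.sum_congr rfl fun z' _ => by ring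
    have eB : GWLoss (fun x x' => dist x x') (fun y y' => dist y y') μXY
        = ∑ x, ∑ y, ∑ z, ∑ x', ∑ y', ∑ z',
            (μXY x y * μYZ y z / μY y) * (μXY x' y' * μYZ y' z' / μY y') *
              (dist x x' - dist y y') ^ 2 := by
      rw [collapse_z (fun x y z => μXY x y * μYZ y z / μY y) μXY hLz
        (fun x y x' y' => (dist x x' - dist y y') ^ 2)]
      simp only [GWLoss]
      refine Finset.sum_congr rfl fun x _ => Finset.sum_congr rfl fun y _ =>
        Finset.sum_congr rfl fun x' _ => Finset.sum_congr rfl fun y' _ => by ring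
    have eC : GWLoss (fun y y' => dist y y') (fun z z' => dist z z') μYZ
        = ∑ x, ∑ y, ∑ z, ∑ x', ∑ y', ∑ z',
            (μXY x y * μYZ y z / μY y) * (μXY x' y' * μYZ y' z' / μY y') *
              (dist y y' - dist z z') ^ 2 := by
      rw [collapse_x (fun x y z => μXY x y * μYZ y z / μY y) μYZ hLx
        (fun y z y' z' => (dist y y' - dist z z') ^ 2)]
      simp only [GWLoss]
      refine Finset.sum_congr rfl fun y _ => Finset.sum_congr rfl fun z _ =>
        Finset.sum_congr rfl fun y' _ => Finset.sum_congr rfl fun z' _ => by ring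
    rw [eA, eB, eC]
    exact minkowski6
      (fun x y z x' y' z' => (μXY x y * μYZ y z / μY y) * (μXY x' y' * μYZ y' z' / μY y'))
      (fun x y z x' y' z' => dist x x' - dist y y')
      (fun x y z x' y' z' => dist y y' - dist z z')
      (fun x y z x' y' z' => mul_nonneg (hLnn x y z) (hLnn x' y' z'))
end

section
/- Let X be a finite metric measure space and P_X an m-pointed partition of X with quantized representation Xᵐ. Then the Gromov–Wasserstein distance between X and its quantized representation is bounded by twice the quantized eccentricity: d_GW(X, Xᵐ) ≤ 2 q(P_X). -/
open Finset

/-- `d_GW(X, Xᵐ) ≤ 2 q(P_X)`. -/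
theorem dGW_quantized_representation_le_two_qEcc
    {X : Type*} [Fintype X] [MetricSpace X] {m : ℕ}
    (μX : X → ℝ) (hμX : IsProb μX) (P : PointedPartition X m) :
    dGW (fun x x' => dist x x') (fun p q => dist (P.rep p) (P.rep q))
        μX (blockMass μX P) ≤
      2 * qEcc (fun x x' => dist x x') μX P := by
  classical
  set dX : X → X → ℝ := fun x x' => dist x x' with hdX
  set dY : Fin m → Fin m → ℝ := fun p q => dist (P.rep p) (P.rep q) with hdY
  set μ : X → Fin m → ℝ := fun x p => if P.part x = p then μX x else 0 with hμdef
  have hcoup : IsCoupling μX (blockMass μX P) μ := by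
    refine ⟨?_, ?_, ?_⟩
    · intro x p; simp only [hμdef]; split
      · exact hμX.1 x
      · exact le_refl 0
    · intro x; simp [hμdef]
    · intro p; simp [hμdef, blockMass]
  have hbdd : BddBelow {r : ℝ | ∃ ν, IsCoupling μX (blockMass μX P) ν ∧
      r = Real.sqrt (GWLoss dX dY ν)} := by
    refine ⟨0, ?_⟩
    rintro r ⟨ν, _, rfl⟩
    exact Real.sqrt_nonneg _
  have hmem : Real.sqrt (GWLoss dX dY μ) ∈ {r : ℝ | ∃ ν,
      IsCoupling μX (blockMass μX P) ν ∧ r = Real.sqrt (GWLoss dX dY ν)} :=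
    ⟨μ, hcoup, rfl⟩
  have h1 : dGW dX dY μX (blockMass μX P) ≤ Real.sqrt (GWLoss dX dY μ) :=
    csInf_le hbdd hmem
  -- now bound sqrt (GWLoss) by 2 * qEcc
  set f : X → ℝ := fun x => dist x (P.rep (P.part x)) ^ 2 with hf
  set T : ℝ := ∑ x, f x * μX x with hT
  set S : ℝ := ∑ p, blockMass μX P p * ∑ x, dX (P.rep p) x ^ 2 * blockMeasure μX P p x with hS
  have hkey : GWLoss dX dY μ =
      ∑ x, ∑ x', (dX x x' - dY (P.part x) (P.part x')) ^ 2 * μX x * μX x' := by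
    unfold GWLoss
    refine Finset.sum_congr rfl fun x _ => ?_
    rw [Finset.sum_comm]
    refine Finset.sum_congr rfl fun x' _ => ?_
    simp [hμdef, mul_ite, ite_mul, Finset.sum_ite_eq]
  have hmass : ∀ p, 0 ≤ blockMass μX P p := by
    intro p
    refine Finset.sum_nonneg fun x _ => ?_
    split
    · exact hμX.1 x
    · exact le_refl 0
  have hpt : ∀ x x', (dX x x' - dY (P.part x) (P.part x')) ^ 2 ≤ 2 * f x + 2 * f x' := by
    intro x x'
    have h1 : dist x x' ≤ dist x (P.rep (P.part x)) + dist (P.rep (P.part x)) (P.rep (P.part x'))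
        + dist (P.rep (P.part x')) x' := dist_triangle4 _ _ _ _
    have h2 : dist (P.rep (P.part x)) (P.rep (P.part x')) ≤ dist (P.rep (P.part x)) x
        + dist x x' + dist x' (P.rep (P.part x')) := dist_triangle4 _ _ _ _
    have ha : dist (P.rep (P.part x)) x = dist x (P.rep (P.part x)) := dist_comm _ _
    have hb : dist (P.rep (P.part x')) x' = dist x' (P.rep (P.part x')) := dist_comm _ _
    simp only [hdX, hdY, hf]
    nlinarith [sq_nonneg (dist x (P.rep (P.part x)) - dist x' (P.rep (P.part x')))]
  have hsum : ∑ x, ∑ x', (2 * f x + 2 * f x') * μX x * μX x' = 4 * T := by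
    have h1 : ∀ x : X, ∑ x', (2 * f x + 2 * f x') * μX x * μX x'
        = 2 * f x * μX x + 2 * μX x * T := by
      intro x
      calc ∑ x', (2 * f x + 2 * f x') * μX x * μX x'
          = ∑ x', (2 * f x * μX x * μX x' + 2 * μX x * (f x' * μX x')) :=
            Finset.sum_congr rfl fun x' _ => by ring
        _ = 2 * f x * μX x * (∑ x', μX x') + 2 * μX x * (∑ x', f x' * μX x') := by
            rw [Finset.sum_add_distrib, ← Finset.mul_sum, ← Finset.mul_sum]
        _ = 2 * f x * μX x + 2 * μX x * T := by rw [hμX.2, hT]; ring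
    rw [Finset.sum_congr rfl fun x _ => h1 x, Finset.sum_add_distrib]
    have h2 : ∑ x, 2 * f x * μX x = 2 * T := by
      rw [hT, Finset.mul_sum]; exact Finset.sum_congr rfl fun x _ => by ring
    have h3 : ∑ x, 2 * μX x * T = 2 * T := by
      rw [← Finset.sum_mul, ← Finset.mul_sum, hμX.2]; ring
    rw [h2, h3]; ring
  have hle4T : GWLoss dX dY μ ≤ 4 * T := by
    rw [hkey]
    calc ∑ x, ∑ x', (dX x x' - dY (P.part x) (P.part x')) ^ 2 * μX x * μX x'
        ≤ ∑ x, ∑ x', (2 * f x + 2 * f x') * μX x * μX x' := by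
          refine Finset.sum_le_sum fun x _ => Finset.sum_le_sum fun x' _ => ?_
          have h0 : 0 ≤ μX x * μX x' := mul_nonneg (hμX.1 x) (hμX.1 x')
          nlinarith [mul_le_mul_of_nonneg_right (hpt x x') h0]
      _ = 4 * T := hsum
  have hTS : T = S := by
    have hper : ∀ p, blockMass μX P p * ∑ x, dX (P.rep p) x ^ 2 * blockMeasure μX P p x
        = ∑ x, if P.part x = p then dX (P.rep p) x ^ 2 * μX x else 0 := by
      intro p
      rw [Finset.mul_sum]
      refine Finset.sum_congr rfl fun x _ => ?_
      rw [blockMeasure]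
      by_cases hx : P.part x = p
      · simp only [hx, if_true]
        by_cases hm : blockMass μX P p = 0
        · have hx0 : μX x = 0 := by
            have h0 := (Finset.sum_eq_zero_iff_of_nonneg (fun x' _ => by
              split
              · exact hμX.1 x'
              · exact le_refl 0)).mp hm x (Finset.mem_univ x)
            simpa [hx] using h0
          simp [hx0, hm]
        · field_simp
      · simp [hx]
    calc T = ∑ x, ∑ p, if P.part x = p then dX (P.rep p) x ^ 2 * μX x else 0 := by
          rw [hT]
          refine Finset.sum_congr rfl fun x _ => ?_
          rw [Finset.sum_ite_eq Finset.univ (P.part x) fun p => dX (P.rep p) x ^ 2 * μX x]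
          simp [hf, hdX, dist_comm]
      _ = ∑ p, ∑ x, if P.part x = p then dX (P.rep p) x ^ 2 * μX x else 0 := Finset.sum_comm
      _ = S := by
          rw [hS]
          exact Finset.sum_congr rfl fun p _ => (hper p).symm
  have hSnn : 0 ≤ S := by
    rw [← hTS, hT]
    refine Finset.sum_nonneg fun x _ => mul_nonneg ?_ (hμX.1 x)
    simp only [hf]
    positivity
  have hq : qEcc dX μX P = Real.sqrt S := by rw [qEcc, hS]
  have h2 : Real.sqrt (GWLoss dX dY μ) ≤ 2 * qEcc dX μX P := by
    calc Real.sqrt (GWLoss dX dY μ) ≤ Real.sqrt (4 * S) := by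
          apply Real.sqrt_le_sqrt
          rw [← hTS]; linarith [hle4T]
      _ = 2 * Real.sqrt S := by
          rw [show (4 : ℝ) * S = 2 ^ 2 * S by ring, Real.sqrt_mul (by norm_num) S,
            Real.sqrt_sq (by norm_num : (0:ℝ) ≤ 2)]
      _ = 2 * qEcc dX μX P := by rw [hq]
  exact le_trans h1 h2
end

section
/- Let X be a finite metric measure space and m ≥ 1 with m ≤ |X|. Then the minimum over all m-pointed partitions P_X of X of the Gromov–Wasserstein distance between X and the quantized representation Xᵐ determined by P_X satisfies min_{P_X} d_GW(X, Xᵐ) ≤ 2 q_m(X), where q_m(X) is the m-quantized eccentricity of X. -/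
open Finset

section Aux

variable {X : Type*} [Fintype X] [MetricSpace X]

/-- If a block has zero mass, every point of the block has zero measure. -/
lemma blockMass_eq_zero {μX : X → ℝ} (hμX : ∀ x, 0 ≤ μX x) {m : ℕ}
    (P : PointedPartition X m) {p : Fin m} (hp : blockMass μX P p = 0)
    {x : X} (hx : P.part x = p) : μX x = 0 := by
  have h := (Finset.sum_eq_zero_iff_of_nonneg
    (fun x _ => by split <;> simp [hμX x])).mp hp x (mem_univ x)
  simpa [hx] using h

lemma qEcc_sq_eq {μX : X → ℝ} (hμX : ∀ x, 0 ≤ μX x) {m : ℕ}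
    (P : PointedPartition X m) :
    (∑ p, blockMass μX P p * ∑ x, dist (P.rep p) x ^ 2 * blockMeasure μX P p x)
      = ∑ x, dist x (P.rep (P.part x)) ^ 2 * μX x := by
  have : ∀ p, blockMass μX P p * ∑ x, dist (P.rep p) x ^ 2 * blockMeasure μX P p x
      = ∑ x, if P.part x = p then dist x (P.rep p) ^ 2 * μX x else 0 := by
    intro p
    rw [Finset.mul_sum]
    refine Finset.sum_congr rfl fun x _ => ?_
    unfold blockMeasure
    by_cases hx : P.part x = p
    · simp only [hx, if_true]
      by_cases h0 : blockMass μX P p = 0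
      · rw [blockMass_eq_zero hμX P h0 hx]; simp
      · rw [dist_comm]; field_simp
    · simp [hx]
  rw [Finset.sum_congr rfl fun p _ => this p, Finset.sum_comm]
  refine Finset.sum_congr rfl fun x _ => ?_
  simp [Finset.sum_ite_eq]

lemma dGW_le_two_qEcc (μX : X → ℝ) (hμX : IsProb μX) {m : ℕ}
    (P : PointedPartition X m) :
    dGW (fun x x' => dist x x') (fun p q => dist (P.rep p) (P.rep q))
        μX (blockMass μX P) ≤ 2 * qEcc (fun x x' => dist x x') μX P := by
  set μ0 : X → Fin m → ℝ := fun x p => if P.part x = p then μX x else 0 with hμ0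
  set e : X → ℝ := fun x => dist x (P.rep (P.part x)) with he
  have hC : IsCoupling μX (blockMass μX P) μ0 := by
    refine ⟨fun x p => by by_cases h : P.part x = p <;> simp [hμ0, h, hμX.1 x], ?_, ?_⟩
    · intro x; simp [hμ0, Finset.sum_ite_eq]
    · intro p; rfl
  -- compute the GW loss of μ0
  have hGW : GWLoss (fun x x' => dist x x')
      (fun p q => dist (P.rep p) (P.rep q)) μ0 =
      ∑ x, ∑ x', (dist x x' - dist (P.rep (P.part x)) (P.rep (P.part x'))) ^ 2
        * μX x * μX x' := by
    unfold GWLoss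
    refine Finset.sum_congr rfl fun x _ => ?_
    rw [Finset.sum_comm]
    refine Finset.sum_congr rfl fun x' _ => ?_
    simp [hμ0, mul_ite, ite_mul, mul_zero, zero_mul, Finset.sum_ite_eq]
  -- pointwise bound
  have hpt : ∀ x x' : X,
      (dist x x' - dist (P.rep (P.part x)) (P.rep (P.part x'))) ^ 2
        ≤ 2 * e x ^ 2 + 2 * e x' ^ 2 := by
    intro x x'
    have h1 : |dist x x' - dist (P.rep (P.part x)) (P.rep (P.part x'))| ≤ e x + e x' := by
      calc |dist x x' - dist (P.rep (P.part x)) (P.rep (P.part x'))|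
          ≤ |dist x x' - dist (P.rep (P.part x)) x'|
            + |dist (P.rep (P.part x)) x' - dist (P.rep (P.part x)) (P.rep (P.part x'))| :=
            abs_sub_le _ _ _
        _ ≤ e x + e x' := by
            refine add_le_add (abs_dist_sub_le _ _ _) ?_
            rw [dist_comm (P.rep (P.part x)) x',
              dist_comm (P.rep (P.part x)) (P.rep (P.part x'))]
            exact abs_dist_sub_le _ _ _
    have h2 : (dist x x' - dist (P.rep (P.part x)) (P.rep (P.part x'))) ^ 2
        ≤ (e x + e x') ^ 2 := by
      rw [← sq_abs]
      exact pow_le_pow_left₀ (abs_nonneg _) h1 2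
    nlinarith [sq_nonneg (e x - e x')]
  set E : ℝ := ∑ x, e x ^ 2 * μX x with hE
  have hEnonneg : 0 ≤ E := Finset.sum_nonneg fun x _ => mul_nonneg (sq_nonneg _) (hμX.1 x)
  have hGWle : GWLoss (fun x x' => dist x x')
      (fun p q => dist (P.rep p) (P.rep q)) μ0 ≤ 4 * E := by
    rw [hGW]
    calc ∑ x, ∑ x', (dist x x' - dist (P.rep (P.part x)) (P.rep (P.part x'))) ^ 2
          * μX x * μX x'
        ≤ ∑ x, ∑ x', (2 * e x ^ 2 + 2 * e x' ^ 2) * μX x * μX x' := by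
          refine Finset.sum_le_sum fun x _ => Finset.sum_le_sum fun x' _ => ?_
          exact mul_le_mul_of_nonneg_right
            (mul_le_mul_of_nonneg_right (hpt x x') (hμX.1 x)) (hμX.1 x')
      _ = (∑ x, 2 * (e x ^ 2 * μX x)) * (∑ x', μX x')
            + (∑ x, μX x) * (∑ x', 2 * (e x' ^ 2 * μX x')) := by
          rw [Finset.sum_mul_sum, Finset.sum_mul_sum, ← Finset.sum_add_distrib]
          refine Finset.sum_congr rfl fun x _ => ?_
          rw [← Finset.sum_add_distrib]
          exact Finset.sum_congr rfl fun x' _ => by ring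
      _ = 4 * E := by
          rw [hμX.2, ← Finset.mul_sum, ← hE]; ring
  -- qEcc in terms of E
  have hq : qEcc (fun x x' => dist x x') μX P = Real.sqrt E := by
    unfold qEcc
    rw [qEcc_sq_eq hμX.1 P]
  have hkey : Real.sqrt (GWLoss (fun x x' => dist x x')
      (fun p q => dist (P.rep p) (P.rep q)) μ0) ≤ 2 * qEcc (fun x x' => dist x x') μX P := by
    rw [hq]
    calc Real.sqrt (GWLoss (fun x x' => dist x x')
          (fun p q => dist (P.rep p) (P.rep q)) μ0)
        ≤ Real.sqrt (4 * E) := Real.sqrt_le_sqrt hGWle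
      _ = 2 * Real.sqrt E := by
          rw [show (4 : ℝ) * E = 2 ^ 2 * E by ring,
            Real.sqrt_mul (by positivity), Real.sqrt_sq (by norm_num)]
  refine le_trans (csInf_le ?_ ?_) hkey
  · exact ⟨0, fun r ⟨μ, _, hr⟩ => hr ▸ Real.sqrt_nonneg _⟩
  · exact ⟨μ0, hC, rfl⟩

lemma exists_pointedPartition (m : ℕ) (hm : 1 ≤ m) (hmX : m ≤ Fintype.card X) :
    Nonempty (PointedPartition X m) := by
  obtain ⟨f⟩ : Nonempty (Fin m ↪ X) :=
    Function.Embedding.nonempty_iff_card_le.mpr (by simpa using hmX)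
  have hm0 : 0 < m := hm
  classical
  refine ⟨⟨fun x => if h : ∃ p, f p = x then h.choose else ⟨0, hm0⟩, f, fun p => ?_⟩⟩
  have hex : ∃ q, f q = f p := ⟨p, rfl⟩
  simp only [dif_pos hex]
  exact f.injective hex.choose_spec

end Aux

/-- `min_{P_X} d_GW(X, Xᵐ) ≤ 2 q_m(X)`. -/
theorem min_dGW_quantized_representation_le_two_qEccMin
    {X : Type*} [Fintype X] [MetricSpace X]
    (μX : X → ℝ) (hμX : IsProb μX) (m : ℕ) (hm : 1 ≤ m) (hmX : m ≤ Fintype.card X) :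
    sInf {r : ℝ | ∃ P : PointedPartition X m,
        r = dGW (fun x x' => dist x x') (fun p q => dist (P.rep p) (P.rep q))
          μX (blockMass μX P)} ≤
      2 * qEccMin X (fun x x' => dist x x') μX m := by
  obtain ⟨P0⟩ := exists_pointedPartition (X := X) m hm hmX
  set S := {r : ℝ | ∃ P : PointedPartition X m,
      r = dGW (fun x x' => dist x x') (fun p q => dist (P.rep p) (P.rep q))
        μX (blockMass μX P)} with hS
  have hSbdd : BddBelow S := by
    refine ⟨0, fun r ⟨P, hr⟩ => ?_⟩
    rw [hr]
    exact Real.sInf_nonneg fun x ⟨μ, _, hx⟩ => hx ▸ Real.sqrt_nonneg _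
  have hall : ∀ P : PointedPartition X m,
      sInf S ≤ 2 * qEcc (fun x x' => dist x x') μX P := fun P =>
    le_trans (csInf_le hSbdd ⟨P, rfl⟩) (dGW_le_two_qEcc μX hμX P)
  have hlb : sInf S / 2 ≤ qEccMin X (fun x x' => dist x x') μX m := by
    refine le_csInf ⟨_, P0, rfl⟩ fun r ⟨P, hr⟩ => ?_
    have := hall P
    rw [hr]
    linarith
  linarith
end

section
/- Let X and Y be finite metric measure spaces and m ≥ 1 with m ≤ |X| and m ≤ |Y|. Then min over m-pointed partitions P_X of X and P_Y of Y of |d_GW(X, Y) − d_GW(Xᵐ, Yᵐ)| is at most 2(q_m(X) + q_m(Y)), where Xᵐ and Yᵐ are the quantized representations determined by P_X and P_Y. -/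
open Finset

noncomputable section AuxQGW
namespace QGW


lemma sum_mul_le_sqrt {ι : Type*} [Fintype ι] (w a b : ι → ℝ) (hw : ∀ i, 0 ≤ w i) :
    ∑ i, w i * (a i * b i) ≤
      Real.sqrt (∑ i, w i * a i ^ 2) * Real.sqrt (∑ i, w i * b i ^ 2) := by
  have ea : ∀ i, (Real.sqrt (w i) * a i) ^ 2 = w i * a i ^ 2 := fun i => by
    rw [mul_pow, Real.sq_sqrt (hw i)]
  have eb : ∀ i, (Real.sqrt (w i) * b i) ^ 2 = w i * b i ^ 2 := fun i => by
    rw [mul_pow, Real.sq_sqrt (hw i)]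
  have eab : ∀ i, (Real.sqrt (w i) * a i) * (Real.sqrt (w i) * b i) = w i * (a i * b i) := by
    intro i
    calc (Real.sqrt (w i) * a i) * (Real.sqrt (w i) * b i)
        = (Real.sqrt (w i) * Real.sqrt (w i)) * (a i * b i) := by ring
      _ = w i * (a i * b i) := by rw [Real.mul_self_sqrt (hw i)]
  have h := Finset.sum_mul_sq_le_sq_mul_sq Finset.univ
    (fun i => Real.sqrt (w i) * a i) (fun i => Real.sqrt (w i) * b i)
  simp only [eab, ea, eb] at h
  calc ∑ i, w i * (a i * b i)
      ≤ |∑ i, w i * (a i * b i)| := le_abs_self _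
    _ = Real.sqrt ((∑ i, w i * (a i * b i)) ^ 2) := (Real.sqrt_sq_eq_abs _).symm
    _ ≤ Real.sqrt ((∑ i, w i * a i ^ 2) * ∑ i, w i * b i ^ 2) := Real.sqrt_le_sqrt h
    _ = _ := Real.sqrt_mul (Finset.sum_nonneg fun i _ =>
          mul_nonneg (hw i) (sq_nonneg _)) _

lemma minkowski {ι : Type*} [Fintype ι] (w a b : ι → ℝ) (hw : ∀ i, 0 ≤ w i) :
    Real.sqrt (∑ i, w i * (a i + b i) ^ 2) ≤
      Real.sqrt (∑ i, w i * a i ^ 2) + Real.sqrt (∑ i, w i * b i ^ 2) := by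
  set A := ∑ i, w i * a i ^ 2 with hA
  set B := ∑ i, w i * b i ^ 2 with hB
  have hA0 : 0 ≤ A := Finset.sum_nonneg fun i _ => mul_nonneg (hw i) (sq_nonneg _)
  have hB0 : 0 ≤ B := Finset.sum_nonneg fun i _ => mul_nonneg (hw i) (sq_nonneg _)
  have expand : ∑ i, w i * (a i + b i) ^ 2
      = A + 2 * (∑ i, w i * (a i * b i)) + B := by
    have e : ∑ i, w i * (a i + b i) ^ 2
        = ∑ i, (w i * a i ^ 2 + (2 * (w i * (a i * b i)) + w i * b i ^ 2)) :=
      Finset.sum_congr rfl fun i _ => by ring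
    rw [e, Finset.sum_add_distrib, Finset.sum_add_distrib, ← Finset.mul_sum, hA, hB]
    ring
  have hS := sum_mul_le_sqrt w a b hw
  have : ∑ i, w i * (a i + b i) ^ 2 ≤ (Real.sqrt A + Real.sqrt B) ^ 2 := by
    rw [expand, add_sq, Real.sq_sqrt hA0, Real.sq_sqrt hB0]
    nlinarith [hS]
  calc Real.sqrt (∑ i, w i * (a i + b i) ^ 2)
      ≤ Real.sqrt ((Real.sqrt A + Real.sqrt B) ^ 2) := Real.sqrt_le_sqrt this
    _ = |Real.sqrt A + Real.sqrt B| := Real.sqrt_sq_eq_abs _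
    _ = Real.sqrt A + Real.sqrt B := abs_of_nonneg (by positivity)

lemma sqrt_sum_mono {ι : Type*} [Fintype ι] (w f g : ι → ℝ) (hw : ∀ i, 0 ≤ w i)
    (h : ∀ i, f i ^ 2 ≤ g i ^ 2) :
    Real.sqrt (∑ i, w i * f i ^ 2) ≤ Real.sqrt (∑ i, w i * g i ^ 2) :=
  Real.sqrt_le_sqrt (Finset.sum_le_sum fun i _ => mul_le_mul_of_nonneg_left (h i) (hw i))

lemma sum_fiber {Z P : Type*} [Fintype Z] [Fintype P] [DecidableEq P]
    (c : Z → P) (f : P → Z → ℝ) :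
    ∑ p, ∑ z, (if c z = p then f p z else 0) = ∑ z, f (c z) z := by
  rw [Finset.sum_comm]
  refine Finset.sum_congr rfl fun z _ => ?_
  simp [Finset.sum_ite_eq]

lemma sum_ite_prod {A B : Type*} [Fintype A] [Fintype B] (pa : A → Prop) (pb : B → Prop)
    [DecidablePred pa] [DecidablePred pb] (u : A → ℝ) (v : B → ℝ) :
    ∑ z : A × B, (if pa z.1 ∧ pb z.2 then u z.1 * v z.2 else 0)
      = (∑ a, if pa a then u a else 0) * (∑ b, if pb b then v b else 0) := by
  rw [Finset.sum_mul_sum, Fintype.sum_prod_type]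
  refine Finset.sum_congr rfl fun a _ => Finset.sum_congr rfl fun b _ => ?_
  by_cases ha : pa a <;> by_cases hb : pb b <;> simp [ha, hb]


variable {Z : Type*} [Fintype Z] {m : ℕ}

lemma blockMass_nonneg (μZ : Z → ℝ) (hμ : ∀ z, 0 ≤ μZ z) (P : PointedPartition Z m)
    (p : Fin m) : 0 ≤ blockMass μZ P p :=
  Finset.sum_nonneg fun x _ => by by_cases h : P.part x = p <;> simp [h, hμ x]

lemma blockMeasure_nonneg (μZ : Z → ℝ) (hμ : ∀ z, 0 ≤ μZ z) (P : PointedPartition Z m)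
    (p : Fin m) (x : Z) : 0 ≤ blockMeasure μZ P p x := by
  unfold blockMeasure
  by_cases h : P.part x = p
  · simp only [h, if_true]
    exact div_nonneg (hμ x) (blockMass_nonneg μZ hμ P p)
  · simp [h]

lemma le_blockMass (μZ : Z → ℝ) (hμ : ∀ z, 0 ≤ μZ z) (P : PointedPartition Z m)
    {p : Fin m} {x : Z} (h : P.part x = p) : μZ x ≤ blockMass μZ P p := by
  have := Finset.single_le_sum (f := fun x => if P.part x = p then μZ x else 0)
    (fun i _ => by by_cases hi : P.part i = p <;> simp [hi, hμ i]) (Finset.mem_univ x)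
  simpa [blockMass, h] using this

lemma blockMass_mul_blockMeasure (μZ : Z → ℝ) (hμ : ∀ z, 0 ≤ μZ z)
    (P : PointedPartition Z m) (p : Fin m) (x : Z) :
    blockMass μZ P p * blockMeasure μZ P p x = if P.part x = p then μZ x else 0 := by
  unfold blockMeasure
  by_cases h : P.part x = p
  · simp only [h, if_true]
    rcases eq_or_ne (blockMass μZ P p) 0 with h0 | h0
    · have h1 := le_blockMass μZ hμ P h
      rw [h0] at h1
      have : μZ x = 0 := le_antisymm h1 (hμ x)
      simp [h0, this]
    · field_simp
  · simp [h]

lemma sum_blockMeasure (μZ : Z → ℝ) (P : PointedPartition Z m) (p : Fin m) :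
    ∑ x, blockMeasure μZ P p x = if blockMass μZ P p = 0 then 0 else 1 := by
  have h1 : ∀ x, blockMeasure μZ P p x
      = (if P.part x = p then μZ x else 0) / blockMass μZ P p := by
    intro x; unfold blockMeasure; split <;> simp
  simp only [h1, ← Finset.sum_div]
  rw [show ∑ x, (if P.part x = p then μZ x else 0) = blockMass μZ P p from rfl]
  rcases eq_or_ne (blockMass μZ P p) 0 with h | h
  · simp [h]
  · simp [h, div_self h]

lemma sum_blockMass (μZ : Z → ℝ) (P : PointedPartition Z m) :
    ∑ p, blockMass μZ P p = ∑ x, μZ x := by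
  unfold blockMass
  exact sum_fiber P.part fun _ x => μZ x

lemma sum_blockMeasure_restrict (μZ : Z → ℝ) (P : PointedPartition Z m) (p : Fin m) :
    ∑ x, (if P.part x = p then blockMeasure μZ P p x else 0)
      = if blockMass μZ P p = 0 then 0 else 1 := by
  rw [← sum_blockMeasure μZ P p]
  refine Finset.sum_congr rfl fun x _ => ?_
  by_cases h : P.part x = p <;> simp [h, blockMeasure]

lemma qEcc_eq [MetricSpace Z] (μZ : Z → ℝ) (hμ : ∀ z, 0 ≤ μZ z) (P : PointedPartition Z m) :
    qEcc (fun a b => dist a b) μZ P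
      = Real.sqrt (∑ x, μZ x * dist x (P.rep (P.part x)) ^ 2) := by
  unfold qEcc
  congr 1
  have e1 : ∀ p, blockMass μZ P p * ∑ x, dist (P.rep p) x ^ 2 * blockMeasure μZ P p x
      = ∑ x, (if P.part x = p then μZ x * dist x (P.rep p) ^ 2 else 0) := by
    intro p
    rw [Finset.mul_sum]
    refine Finset.sum_congr rfl fun x _ => ?_
    have := blockMass_mul_blockMeasure μZ hμ P p x
    calc blockMass μZ P p * (dist (P.rep p) x ^ 2 * blockMeasure μZ P p x)
        = dist (P.rep p) x ^ 2 * (blockMass μZ P p * blockMeasure μZ P p x) := by ring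
      _ = dist (P.rep p) x ^ 2 * (if P.part x = p then μZ x else 0) := by rw [this]
      _ = _ := by by_cases h : P.part x = p <;> simp [h, dist_comm] <;> ring
  simp only [e1]
  exact sum_fiber P.part fun p x => μZ x * dist x (P.rep p) ^ 2

section Couplings
variable {X Y : Type*} [Fintype X] [Fintype Y] {m : ℕ}

/-- Product weight of a coupling on quadruples. -/
def J (μ : X → Y → ℝ) (z : (X × Y) × (X × Y)) : ℝ := μ z.1.1 z.1.2 * μ z.2.1 z.2.2

lemma GWLoss_prod (dX : X → X → ℝ) (dY : Y → Y → ℝ) (μ : X → Y → ℝ) :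
    GWLoss dX dY μ
      = ∑ z : (X × Y) × (X × Y), J μ z * (dX z.1.1 z.2.1 - dY z.1.2 z.2.2) ^ 2 := by
  unfold GWLoss J
  simp only [Fintype.sum_prod_type]
  exact Finset.sum_congr rfl fun x _ => Finset.sum_congr rfl fun y _ =>
    Finset.sum_congr rfl fun x' _ => Finset.sum_congr rfl fun y' _ => by ring

/-- Pushforward of a coupling to the quantized spaces. -/
def pushC (PX : PointedPartition X m) (PY : PointedPartition Y m) (μ : X → Y → ℝ)
    (p q : Fin m) : ℝ :=
  ∑ x, ∑ y, if PX.part x = p ∧ PY.part y = q then μ x y else 0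

lemma pushC_eq (PX : PointedPartition X m) (PY : PointedPartition Y m) (μ : X → Y → ℝ)
    (p q : Fin m) :
    pushC PX PY μ p q
      = ∑ z : X × Y, if PX.part z.1 = p ∧ PY.part z.2 = q then μ z.1 z.2 else 0 := by
  rw [Fintype.sum_prod_type]; rfl

def cQuad (PX : PointedPartition X m) (PY : PointedPartition Y m)
    (z : (X × Y) × (X × Y)) : (Fin m × Fin m) × (Fin m × Fin m) :=
  ((PX.part z.1.1, PY.part z.1.2), (PX.part z.2.1, PY.part z.2.2))

lemma pushC_mul (PX : PointedPartition X m) (PY : PointedPartition Y m) (μ : X → Y → ℝ)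
    (p q p' q' : Fin m) :
    pushC PX PY μ p q * pushC PX PY μ p' q'
      = ∑ z : (X × Y) × (X × Y),
          if cQuad PX PY z = ((p, q), (p', q')) then J μ z else 0 := by
  rw [pushC_eq, pushC_eq,
    ← sum_ite_prod (fun z1 : X × Y => PX.part z1.1 = p ∧ PY.part z1.2 = q)
      (fun z2 : X × Y => PX.part z2.1 = p' ∧ PY.part z2.2 = q')
      (fun z1 => μ z1.1 z1.2) (fun z2 => μ z2.1 z2.2)]
  refine Finset.sum_congr rfl fun z _ => ?_
  have hiff : (cQuad PX PY z = ((p, q), (p', q')))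
      ↔ ((PX.part z.1.1 = p ∧ PY.part z.1.2 = q) ∧
          (PX.part z.2.1 = p' ∧ PY.part z.2.2 = q')) := by
    simp [cQuad, Prod.ext_iff]
  rw [if_congr hiff rfl rfl]
  rfl

lemma GWLoss_push (PX : PointedPartition X m) (PY : PointedPartition Y m)
    (dm dm' : Fin m → Fin m → ℝ) (μ : X → Y → ℝ) :
    GWLoss dm dm' (pushC PX PY μ)
      = ∑ z : (X × Y) × (X × Y), J μ z *
          (dm (PX.part z.1.1) (PX.part z.2.1) - dm' (PY.part z.1.2) (PY.part z.2.2)) ^ 2 := by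
  rw [GWLoss_prod]
  have e : ∀ P : (Fin m × Fin m) × (Fin m × Fin m),
      J (pushC PX PY μ) P * (dm P.1.1 P.2.1 - dm' P.1.2 P.2.2) ^ 2
        = ∑ z : (X × Y) × (X × Y),
            (if cQuad PX PY z = P then J μ z * (dm P.1.1 P.2.1 - dm' P.1.2 P.2.2) ^ 2 else 0) := by
    rintro ⟨⟨p, q⟩, p', q'⟩
    show (pushC PX PY μ p q * pushC PX PY μ p' q') * _ = _
    rw [pushC_mul, Finset.sum_mul]
    exact Finset.sum_congr rfl fun z _ => by rw [ite_mul, zero_mul]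
  simp only [e]
  rw [sum_fiber (cQuad PX PY)
    (fun P z => J μ z * (dm P.1.1 P.2.1 - dm' P.1.2 P.2.2) ^ 2)]
  rfl

variable {μX : X → ℝ} {μY : Y → ℝ} {μ : X → Y → ℝ}

lemma sum_coupling (hc : IsCoupling μX μY μ) (hX1 : ∑ x, μX x = 1) :
    ∑ z : X × Y, μ z.1 z.2 = 1 := by
  rw [Fintype.sum_prod_type]
  simp only [hc.2.1]
  exact hX1

lemma margA (hc : IsCoupling μX μY μ) (hX1 : ∑ x, μX x = 1) (g : X × Y → ℝ) :
    ∑ z : (X × Y) × (X × Y), J μ z * g z.1 = ∑ z1 : X × Y, μ z1.1 z1.2 * g z1 := by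
  rw [Fintype.sum_prod_type]
  refine Finset.sum_congr rfl fun z1 _ => ?_
  have e : ∀ z2 : X × Y, J μ (z1, z2) * g z1 = (μ z1.1 z1.2 * g z1) * (μ z2.1 z2.2) :=
    fun z2 => by simp only [J]; ring
  rw [Finset.sum_congr rfl fun z2 _ => e z2, ← Finset.mul_sum, sum_coupling hc hX1, mul_one]

lemma margB (hc : IsCoupling μX μY μ) (hX1 : ∑ x, μX x = 1) (g : X × Y → ℝ) :
    ∑ z : (X × Y) × (X × Y), J μ z * g z.2 = ∑ z2 : X × Y, μ z2.1 z2.2 * g z2 := by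
  rw [Fintype.sum_prod_type]
  have e : ∀ z1 : X × Y, ∑ z2 : X × Y, J μ (z1, z2) * g z2
      = μ z1.1 z1.2 * ∑ z2 : X × Y, μ z2.1 z2.2 * g z2 := by
    intro z1
    rw [Finset.mul_sum]
    exact Finset.sum_congr rfl fun z2 _ => by simp only [J]; ring
  rw [Finset.sum_congr rfl fun z1 _ => e z1, ← Finset.sum_mul, sum_coupling hc hX1, one_mul]

lemma margX (hc : IsCoupling μX μY μ) (g : X → ℝ) :
    ∑ z1 : X × Y, μ z1.1 z1.2 * g z1.1 = ∑ x, μX x * g x := by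
  rw [Fintype.sum_prod_type]
  dsimp only
  refine Finset.sum_congr rfl fun x _ => ?_
  rw [← Finset.sum_mul, hc.2.1]

lemma margY (hc : IsCoupling μX μY μ) (g : Y → ℝ) :
    ∑ z1 : X × Y, μ z1.1 z1.2 * g z1.2 = ∑ y, μY y * g y := by
  rw [Fintype.sum_prod_type_right]
  dsimp only
  refine Finset.sum_congr rfl fun y _ => ?_
  rw [← Finset.sum_mul, hc.2.2]

end Couplings

section Couplings2
variable {X Y : Type*} [Fintype X] [Fintype Y] {m : ℕ}
variable {μX : X → ℝ} {μY : Y → ℝ}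

lemma coupling_entry_zero_left {A B : Type*} [Fintype A] [Fintype B] {α : A → ℝ} {β : B → ℝ}
    {μm : A → B → ℝ} (hcm : IsCoupling α β μm) {p : A} {q : B} (h : α p = 0) : μm p q = 0 := by
  have h1 : μm p q ≤ ∑ q', μm p q' :=
    Finset.single_le_sum (fun i _ => hcm.1 p i) (Finset.mem_univ q)
  rw [hcm.2.1 p, h] at h1
  exact le_antisymm h1 (hcm.1 p q)

lemma coupling_entry_zero_right {A B : Type*} [Fintype A] [Fintype B] {α : A → ℝ} {β : B → ℝ}
    {μm : A → B → ℝ} (hcm : IsCoupling α β μm) {p : A} {q : B} (h : β q = 0) : μm p q = 0 := by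
  have h1 : μm p q ≤ ∑ p', μm p' q :=
    Finset.single_le_sum (fun i _ => hcm.1 i q) (Finset.mem_univ p)
  rw [hcm.2.2 q, h] at h1
  exact le_antisymm h1 (hcm.1 p q)

lemma prod_coupling {A B : Type*} [Fintype A] [Fintype B] {α : A → ℝ} {β : B → ℝ}
    (hα : IsProb α) (hβ : IsProb β) : IsCoupling α β (fun a b => α a * β b) :=
  ⟨fun a b => mul_nonneg (hα.1 a) (hβ.1 b),
   fun a => by rw [← Finset.mul_sum, hβ.2, mul_one],
   fun b => by rw [← Finset.sum_mul, hα.2, one_mul]⟩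

lemma blockMass_isProb (hμ : IsProb μX) (P : PointedPartition X m) :
    IsProb (blockMass μX P) :=
  ⟨blockMass_nonneg μX hμ.1 P, by rw [sum_blockMass, hμ.2]⟩

lemma pushC_isCoupling (PX : PointedPartition X m) (PY : PointedPartition Y m)
    {μ : X → Y → ℝ} (hc : IsCoupling μX μY μ) :
    IsCoupling (blockMass μX PX) (blockMass μY PY) (pushC PX PY μ) := by
  refine ⟨fun p q => ?_, fun p => ?_, fun q => ?_⟩
  · exact Finset.sum_nonneg fun x _ => Finset.sum_nonneg fun y _ => by
      by_cases h : PX.part x = p ∧ PY.part y = q <;> simp [h, hc.1 x y]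
  · unfold pushC
    rw [Finset.sum_comm]
    refine Finset.sum_congr rfl fun x _ => ?_
    rw [Finset.sum_comm]
    have e : ∀ y, ∑ q, (if PX.part x = p ∧ PY.part y = q then μ x y else 0)
        = if PX.part x = p then μ x y else 0 := by
      intro y
      by_cases hp : PX.part x = p
      · simp [hp, Finset.sum_ite_eq]
      · simp [hp]
    rw [Finset.sum_congr rfl fun y _ => e y]
    by_cases hp : PX.part x = p <;> simp [hp, hc.2.1 x]
  · unfold pushC
    rw [Finset.sum_comm]
    have e1 : ∀ x, ∑ p, ∑ y, (if PX.part x = p ∧ PY.part y = q then μ x y else 0)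
        = ∑ y, (if PY.part y = q then μ x y else 0) := by
      intro x
      rw [Finset.sum_comm]
      refine Finset.sum_congr rfl fun y _ => ?_
      by_cases hq : PY.part y = q
      · simp [hq, Finset.sum_ite_eq]
      · simp [hq]
    rw [Finset.sum_congr rfl fun x _ => e1 x, Finset.sum_comm]
    refine Finset.sum_congr rfl fun y _ => ?_
    by_cases hq : PY.part y = q <;> simp [hq, hc.2.2 y]

/-- The quantization coupling built from a coupling of the quantized measures. -/
def mkCoupling (μX : X → ℝ) (μY : Y → ℝ) (PX : PointedPartition X m)
    (PY : PointedPartition Y m) (μm : Fin m → Fin m → ℝ) (x : X) (y : Y) : ℝ :=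
  μm (PX.part x) (PY.part y) * blockMeasure μX PX (PX.part x) x *
    blockMeasure μY PY (PY.part y) y

lemma mkCoupling_isCoupling (hμXn : ∀ x, 0 ≤ μX x) (hμYn : ∀ y, 0 ≤ μY y)
    {PX : PointedPartition X m} {PY : PointedPartition Y m} {μm : Fin m → Fin m → ℝ}
    (hcm : IsCoupling (blockMass μX PX) (blockMass μY PY) μm) :
    IsCoupling μX μY (mkCoupling μX μY PX PY μm) := by
  refine ⟨fun x y => mul_nonneg (mul_nonneg (hcm.1 _ _)
    (blockMeasure_nonneg μX hμXn PX _ x)) (blockMeasure_nonneg μY hμYn PY _ y),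
    fun x => ?_, fun y => ?_⟩
  · have key : ∑ y, μm (PX.part x) (PY.part y) * blockMeasure μY PY (PY.part y) y
        = blockMass μX PX (PX.part x) := by
      rw [← sum_fiber PY.part (fun q y => μm (PX.part x) q * blockMeasure μY PY q y)]
      have e : ∀ q, ∑ y, (if PY.part y = q then μm (PX.part x) q * blockMeasure μY PY q y else 0)
          = μm (PX.part x) q := by
        intro q
        have : ∑ y, (if PY.part y = q then μm (PX.part x) q * blockMeasure μY PY q y else 0)
            = μm (PX.part x) q * ∑ y, (if PY.part y = q then blockMeasure μY PY q y else 0) := by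
          rw [Finset.mul_sum]
          refine Finset.sum_congr rfl fun y _ => ?_
          by_cases h : PY.part y = q <;> simp [h]
        rw [this, sum_blockMeasure_restrict]
        rcases eq_or_ne (blockMass μY PY q) 0 with h0 | h0
        · simp [h0, coupling_entry_zero_right hcm h0]
        · simp [h0]
      rw [Finset.sum_congr rfl fun q _ => e q, hcm.2.1]
    calc ∑ y, mkCoupling μX μY PX PY μm x y
        = blockMeasure μX PX (PX.part x) x *
            ∑ y, μm (PX.part x) (PY.part y) * blockMeasure μY PY (PY.part y) y := by
          rw [Finset.mul_sum]
          exact Finset.sum_congr rfl fun y _ => by unfold mkCoupling; ring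
      _ = blockMeasure μX PX (PX.part x) x * blockMass μX PX (PX.part x) := by rw [key]
      _ = μX x := by
          rw [mul_comm, blockMass_mul_blockMeasure μX hμXn PX, if_pos rfl]
  · have key : ∑ x, μm (PX.part x) (PY.part y) * blockMeasure μX PX (PX.part x) x
        = blockMass μY PY (PY.part y) := by
      rw [← sum_fiber PX.part (fun p x => μm p (PY.part y) * blockMeasure μX PX p x)]
      have e : ∀ p, ∑ x, (if PX.part x = p then μm p (PY.part y) * blockMeasure μX PX p x else 0)
          = μm p (PY.part y) := by
        intro p
        have : ∑ x, (if PX.part x = p then μm p (PY.part y) * blockMeasure μX PX p x else 0)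
            = μm p (PY.part y) * ∑ x, (if PX.part x = p then blockMeasure μX PX p x else 0) := by
          rw [Finset.mul_sum]
          refine Finset.sum_congr rfl fun x _ => ?_
          by_cases h : PX.part x = p <;> simp [h]
        rw [this, sum_blockMeasure_restrict]
        rcases eq_or_ne (blockMass μX PX p) 0 with h0 | h0
        · simp [h0, coupling_entry_zero_left hcm h0]
        · simp [h0]
      rw [Finset.sum_congr rfl fun p _ => e p, hcm.2.2]
    calc ∑ x, mkCoupling μX μY PX PY μm x y
        = blockMeasure μY PY (PY.part y) y *
            ∑ x, μm (PX.part x) (PY.part y) * blockMeasure μX PX (PX.part x) x := by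
          rw [Finset.mul_sum]
          exact Finset.sum_congr rfl fun x _ => by unfold mkCoupling; ring
      _ = blockMeasure μY PY (PY.part y) y * blockMass μY PY (PY.part y) := by rw [key]
      _ = μY y := by
          rw [mul_comm, blockMass_mul_blockMeasure μY hμYn PY, if_pos rfl]

lemma pushC_mkCoupling (hμXn : ∀ x, 0 ≤ μX x) (hμYn : ∀ y, 0 ≤ μY y)
    {PX : PointedPartition X m} {PY : PointedPartition Y m} {μm : Fin m → Fin m → ℝ}
    (hcm : IsCoupling (blockMass μX PX) (blockMass μY PY) μm) :
    pushC PX PY (mkCoupling μX μY PX PY μm) = μm := by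
  funext p q
  have step : pushC PX PY (mkCoupling μX μY PX PY μm) p q
      = ∑ x, (if PX.part x = p then blockMeasure μX PX p x else 0) *
          ((∑ y, (if PY.part y = q then blockMeasure μY PY q y else 0)) * μm p q) := by
    unfold pushC
    refine Finset.sum_congr rfl fun x _ => ?_
    have e : ∀ y, (if PX.part x = p ∧ PY.part y = q then mkCoupling μX μY PX PY μm x y else 0)
        = (if PX.part x = p then blockMeasure μX PX p x else 0) *
            ((if PY.part y = q then blockMeasure μY PY q y else 0) * μm p q) := by
      intro y
      unfold mkCoupling
      by_cases hp : PX.part x = p <;> by_cases hq : PY.part y = q <;>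
        simp [hp, hq] <;> ring
    rw [Finset.sum_congr rfl fun y _ => e y, ← Finset.mul_sum, ← Finset.sum_mul]
  rw [step, ← Finset.sum_mul]
  rw [show (∑ x, if PX.part x = p then blockMeasure μX PX p x else 0)
      = if blockMass μX PX p = 0 then 0 else 1 from sum_blockMeasure_restrict μX PX p]
  rw [show (∑ y, if PY.part y = q then blockMeasure μY PY q y else 0)
      = if blockMass μY PY q = 0 then 0 else 1 from sum_blockMeasure_restrict μY PY q]
  rcases eq_or_ne (blockMass μX PX p) 0 with h0 | h0
  · simp [h0, coupling_entry_zero_left hcm h0]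
  · rcases eq_or_ne (blockMass μY PY q) 0 with h1 | h1
    · simp [h1, coupling_entry_zero_right hcm h1]
    · simp [h0, h1]

lemma dGW_le_sqrt (dX : X → X → ℝ) (dY : Y → Y → ℝ) {μ : X → Y → ℝ}
    (hc : IsCoupling μX μY μ) :
    dGW dX dY μX μY ≤ Real.sqrt (GWLoss dX dY μ) := by
  unfold dGW
  apply csInf_le
  · exact ⟨0, by rintro r ⟨μ', _, rfl⟩; exact Real.sqrt_nonneg _⟩
  · exact ⟨μ, hc, rfl⟩

lemma le_dGW (dX : X → X → ℝ) (dY : Y → Y → ℝ) {c : ℝ} {μ0 : X → Y → ℝ}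
    (h0 : IsCoupling μX μY μ0)
    (h : ∀ μ : X → Y → ℝ, IsCoupling μX μY μ → c ≤ Real.sqrt (GWLoss dX dY μ)) :
    c ≤ dGW dX dY μX μY := by
  unfold dGW
  refine le_csInf ⟨Real.sqrt (GWLoss dX dY μ0), ⟨μ0, h0, rfl⟩⟩ ?_
  rintro r ⟨μ, hμ, rfl⟩
  exact h μ hμ

end Couplings2

section Core
variable {X Y : Type*} [Fintype X] [Fintype Y] [MetricSpace X] [MetricSpace Y] {m : ℕ}
variable {μX : X → ℝ} {μY : Y → ℝ}

lemma sqrt_comparison (hμX : IsProb μX) (hμY : IsProb μY)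
    (PX : PointedPartition X m) (PY : PointedPartition Y m)
    {μ : X → Y → ℝ} (hc : IsCoupling μX μY μ)
    (a b : (X × Y) × (X × Y) → ℝ)
    (hab : ∀ z, |a z| ≤ |b z| + (dist z.1.1 (PX.rep (PX.part z.1.1))
      + (dist z.2.1 (PX.rep (PX.part z.2.1))
      + (dist z.1.2 (PY.rep (PY.part z.1.2))
      + dist z.2.2 (PY.rep (PY.part z.2.2)))))) :
    Real.sqrt (∑ z, J μ z * a z ^ 2) ≤ Real.sqrt (∑ z, J μ z * b z ^ 2)
      + 2 * (qEcc (fun x x' => dist x x') μX PX + qEcc (fun y y' => dist y y') μY PY) := by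
  classical
  have hJ : ∀ z, 0 ≤ J μ z := fun z => mul_nonneg (hc.1 _ _) (hc.1 _ _)
  set e1 : (X × Y) × (X × Y) → ℝ := fun z => dist z.1.1 (PX.rep (PX.part z.1.1)) with he1
  set e2 : (X × Y) × (X × Y) → ℝ := fun z => dist z.2.1 (PX.rep (PX.part z.2.1)) with he2
  set e3 : (X × Y) × (X × Y) → ℝ := fun z => dist z.1.2 (PY.rep (PY.part z.1.2)) with he3
  set e4 : (X × Y) × (X × Y) → ℝ := fun z => dist z.2.2 (PY.rep (PY.part z.2.2)) with he4
  have hpt : ∀ z, a z ^ 2 ≤ ((fun z => |b z|) z + (e1 z + (e2 z + (e3 z + e4 z)))) ^ 2 := by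
    intro z
    have h1 : |a z| ≤ |b z| + (e1 z + (e2 z + (e3 z + e4 z))) := hab z
    have h2 := pow_le_pow_left₀ (abs_nonneg (a z)) h1 2
    rwa [sq_abs] at h2
  have step1 : Real.sqrt (∑ z, J μ z * a z ^ 2)
      ≤ Real.sqrt (∑ z, J μ z * ((fun z => |b z|) z + (e1 z + (e2 z + (e3 z + e4 z)))) ^ 2) := by
    exact Real.sqrt_le_sqrt (Finset.sum_le_sum fun z _ =>
      mul_le_mul_of_nonneg_left (hpt z) (hJ z))
  have step2 : Real.sqrt (∑ z, J μ z * ((fun z => |b z|) z + (e1 z + (e2 z + (e3 z + e4 z)))) ^ 2)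
      ≤ Real.sqrt (∑ z, J μ z * ((fun z => |b z|) z) ^ 2)
        + Real.sqrt (∑ z, J μ z * (e1 z + (e2 z + (e3 z + e4 z))) ^ 2) :=
    minkowski (J μ) (fun z => |b z|) (fun z => e1 z + (e2 z + (e3 z + e4 z))) hJ
  have habs : ∑ z, J μ z * ((fun z => |b z|) z) ^ 2 = ∑ z, J μ z * b z ^ 2 :=
    Finset.sum_congr rfl fun z _ => by rw [sq_abs]
  have step3 : Real.sqrt (∑ z, J μ z * (e1 z + (e2 z + (e3 z + e4 z))) ^ 2)
      ≤ Real.sqrt (∑ z, J μ z * e1 z ^ 2)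
        + (Real.sqrt (∑ z, J μ z * e2 z ^ 2)
          + (Real.sqrt (∑ z, J μ z * e3 z ^ 2) + Real.sqrt (∑ z, J μ z * e4 z ^ 2))) := by
    refine le_trans (minkowski (J μ) e1 (fun z => e2 z + (e3 z + e4 z)) hJ) ?_
    refine add_le_add_right ?_ _
    refine le_trans (minkowski (J μ) e2 (fun z => e3 z + e4 z) hJ) ?_
    exact add_le_add_right (minkowski (J μ) e3 e4 hJ) _
  -- identify the four eccentricity terms
  have hqX : qEcc (fun x x' => dist x x') μX PX
      = Real.sqrt (∑ x, μX x * dist x (PX.rep (PX.part x)) ^ 2) := qEcc_eq μX hμX.1 PX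
  have hqY : qEcc (fun y y' => dist y y') μY PY
      = Real.sqrt (∑ y, μY y * dist y (PY.rep (PY.part y)) ^ 2) := qEcc_eq μY hμY.1 PY
  have hE1 : ∑ z, J μ z * e1 z ^ 2 = ∑ x, μX x * dist x (PX.rep (PX.part x)) ^ 2 := by
    have h1 := margA hc hμX.2 (fun z1 : X × Y => dist z1.1 (PX.rep (PX.part z1.1)) ^ 2)
    have h2 := margX hc (fun x => dist x (PX.rep (PX.part x)) ^ 2)
    exact h1.trans h2
  have hE2 : ∑ z, J μ z * e2 z ^ 2 = ∑ x, μX x * dist x (PX.rep (PX.part x)) ^ 2 := by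
    have h1 := margB hc hμX.2 (fun z1 : X × Y => dist z1.1 (PX.rep (PX.part z1.1)) ^ 2)
    have h2 := margX hc (fun x => dist x (PX.rep (PX.part x)) ^ 2)
    exact h1.trans h2
  have hE3 : ∑ z, J μ z * e3 z ^ 2 = ∑ y, μY y * dist y (PY.rep (PY.part y)) ^ 2 := by
    have h1 := margA hc hμX.2 (fun z1 : X × Y => dist z1.2 (PY.rep (PY.part z1.2)) ^ 2)
    have h2 := margY hc (fun y => dist y (PY.rep (PY.part y)) ^ 2)
    exact h1.trans h2
  have hE4 : ∑ z, J μ z * e4 z ^ 2 = ∑ y, μY y * dist y (PY.rep (PY.part y)) ^ 2 := by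
    have h1 := margB hc hμX.2 (fun z1 : X × Y => dist z1.2 (PY.rep (PY.part z1.2)) ^ 2)
    have h2 := margY hc (fun y => dist y (PY.rep (PY.part y)) ^ 2)
    exact h1.trans h2
  rw [habs] at step2
  rw [hE1, hE2, hE3, hE4] at step3
  rw [hqX, hqY]
  calc Real.sqrt (∑ z, J μ z * a z ^ 2)
      ≤ Real.sqrt (∑ z, J μ z * ((fun z => |b z|) z + (e1 z + (e2 z + (e3 z + e4 z)))) ^ 2) :=
        step1
    _ ≤ Real.sqrt (∑ z, J μ z * b z ^ 2)
        + Real.sqrt (∑ z, J μ z * (e1 z + (e2 z + (e3 z + e4 z))) ^ 2) := step2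
    _ ≤ Real.sqrt (∑ z, J μ z * b z ^ 2)
        + (Real.sqrt (∑ x, μX x * dist x (PX.rep (PX.part x)) ^ 2)
          + (Real.sqrt (∑ x, μX x * dist x (PX.rep (PX.part x)) ^ 2)
            + (Real.sqrt (∑ y, μY y * dist y (PY.rep (PY.part y)) ^ 2)
              + Real.sqrt (∑ y, μY y * dist y (PY.rep (PY.part y)) ^ 2)))) :=
        add_le_add_right step3 _
    _ = Real.sqrt (∑ z, J μ z * b z ^ 2)
        + 2 * (Real.sqrt (∑ x, μX x * dist x (PX.rep (PX.part x)) ^ 2)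
          + Real.sqrt (∑ y, μY y * dist y (PY.rep (PY.part y)) ^ 2)) := by ring

lemma pointwise_bound (PX : PointedPartition X m) (PY : PointedPartition Y m)
    (z : (X × Y) × (X × Y)) :
    |dist z.1.1 z.2.1 - dist z.1.2 z.2.2
      - (dist (PX.rep (PX.part z.1.1)) (PX.rep (PX.part z.2.1))
        - dist (PY.rep (PY.part z.1.2)) (PY.rep (PY.part z.2.2)))|
      ≤ dist z.1.1 (PX.rep (PX.part z.1.1))
        + (dist z.2.1 (PX.rep (PX.part z.2.1))
        + (dist z.1.2 (PY.rep (PY.part z.1.2)) + dist z.2.2 (PY.rep (PY.part z.2.2)))) := by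
  obtain ⟨⟨x, y⟩, x', y'⟩ := z
  dsimp only
  have h1 : |dist x x' - dist (PX.rep (PX.part x)) (PX.rep (PX.part x'))|
      ≤ dist x (PX.rep (PX.part x)) + dist x' (PX.rep (PX.part x')) := by
    rw [← Real.dist_eq]
    exact dist_dist_dist_le x x' (PX.rep (PX.part x)) (PX.rep (PX.part x'))
  have h2 : |dist y y' - dist (PY.rep (PY.part y)) (PY.rep (PY.part y'))|
      ≤ dist y (PY.rep (PY.part y)) + dist y' (PY.rep (PY.part y')) := by
    rw [← Real.dist_eq]
    exact dist_dist_dist_le y y' (PY.rep (PY.part y)) (PY.rep (PY.part y'))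
  have h3 : |dist x x' - dist y y'
      - (dist (PX.rep (PX.part x)) (PX.rep (PX.part x'))
        - dist (PY.rep (PY.part y)) (PY.rep (PY.part y')))|
      ≤ |dist x x' - dist (PX.rep (PX.part x)) (PX.rep (PX.part x'))|
        + |dist y y' - dist (PY.rep (PY.part y)) (PY.rep (PY.part y'))| := by
    have : dist x x' - dist y y'
        - (dist (PX.rep (PX.part x)) (PX.rep (PX.part x'))
          - dist (PY.rep (PY.part y)) (PY.rep (PY.part y')))
        = (dist x x' - dist (PX.rep (PX.part x)) (PX.rep (PX.part x')))
          - (dist y y' - dist (PY.rep (PY.part y)) (PY.rep (PY.part y'))) := by ring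
    rw [this]
    exact abs_sub _ _
  linarith

lemma core_ineq (hμX : IsProb μX) (hμY : IsProb μY)
    (PX : PointedPartition X m) (PY : PointedPartition Y m) :
    |dGW (fun x x' => dist x x') (fun y y' => dist y y') μX μY -
      dGW (fun p q => dist (PX.rep p) (PX.rep q)) (fun p q => dist (PY.rep p) (PY.rep q))
        (blockMass μX PX) (blockMass μY PY)|
      ≤ 2 * (qEcc (fun x x' => dist x x') μX PX + qEcc (fun y y' => dist y y') μY PY) := by
  classical
  set dX : X → X → ℝ := fun x x' => dist x x'
  set dY : Y → Y → ℝ := fun y y' => dist y y'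
  set dm : Fin m → Fin m → ℝ := fun p q => dist (PX.rep p) (PX.rep q) with hdm
  set dm' : Fin m → Fin m → ℝ := fun p q => dist (PY.rep p) (PY.rep q) with hdm'
  set D : ℝ := 2 * (qEcc (fun x x' => dist x x') μX PX + qEcc (fun y y' => dist y y') μY PY)
    with hD
  set f : (X × Y) × (X × Y) → ℝ := fun z => dist z.1.1 z.2.1 - dist z.1.2 z.2.2 with hf
  set g : (X × Y) × (X × Y) → ℝ := fun z =>
    dm (PX.part z.1.1) (PX.part z.2.1) - dm' (PY.part z.1.2) (PY.part z.2.2) with hg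
  have habF : ∀ z, |f z| ≤ |g z| + (dist z.1.1 (PX.rep (PX.part z.1.1))
      + (dist z.2.1 (PX.rep (PX.part z.2.1))
      + (dist z.1.2 (PY.rep (PY.part z.1.2)) + dist z.2.2 (PY.rep (PY.part z.2.2))))) := by
    intro z
    have h := pointwise_bound PX PY z
    have : |f z| ≤ |g z| + |f z - g z| := by
      have := abs_add_le (g z) (f z - g z)
      simpa [add_sub_cancel] using this
    exact le_trans this (by exact add_le_add_right (le_trans (le_of_eq (by rw [hf, hg])) h) _)
  have habG : ∀ z, |g z| ≤ |f z| + (dist z.1.1 (PX.rep (PX.part z.1.1))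
      + (dist z.2.1 (PX.rep (PX.part z.2.1))
      + (dist z.1.2 (PY.rep (PY.part z.1.2)) + dist z.2.2 (PY.rep (PY.part z.2.2))))) := by
    intro z
    have h := pointwise_bound PX PY z
    have : |g z| ≤ |f z| + |f z - g z| := by
      have h2 := abs_add_le (f z) (g z - f z)
      have h3 : |g z - f z| = |f z - g z| := abs_sub_comm _ _
      simpa [add_sub_cancel, h3] using h2
    exact le_trans this (by exact add_le_add_right (le_trans (le_of_eq (by rw [hf, hg])) h) _)
  have hmassP : IsProb (blockMass μX PX) := blockMass_isProb hμX PX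
  have hmassQ : IsProb (blockMass μY PY) := blockMass_isProb hμY PY
  rw [abs_sub_le_iff]
  constructor
  · -- dGW(X,Y) ≤ dGW(Xm,Ym) + D
    rw [sub_le_iff_le_add, add_comm]
    rw [← sub_le_iff_le_add]
    refine le_dGW dm dm' (prod_coupling hmassP hmassQ) ?_
    intro μm hcm
    rw [sub_le_iff_le_add]
    set μA := mkCoupling μX μY PX PY μm with hμA
    have hcA : IsCoupling μX μY μA := mkCoupling_isCoupling hμX.1 hμY.1 hcm
    have h1 : dGW dX dY μX μY ≤ Real.sqrt (GWLoss dX dY μA) := dGW_le_sqrt dX dY hcA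
    have h2 : Real.sqrt (GWLoss dX dY μA) ≤ Real.sqrt (∑ z, J μA z * g z ^ 2) + D := by
      rw [GWLoss_prod]
      exact sqrt_comparison hμX hμY PX PY hcA f g habF
    have h3 : ∑ z, J μA z * g z ^ 2 = GWLoss dm dm' μm := by
      rw [← pushC_mkCoupling hμX.1 hμY.1 hcm, GWLoss_push]
    rw [h3] at h2
    exact le_trans h1 h2
  · -- dGW(Xm,Ym) ≤ dGW(X,Y) + D
    rw [sub_le_iff_le_add, add_comm, ← sub_le_iff_le_add]
    refine le_dGW dX dY (prod_coupling hμX hμY) ?_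
    intro μ hc
    rw [sub_le_iff_le_add]
    have h1 : dGW dm dm' (blockMass μX PX) (blockMass μY PY)
        ≤ Real.sqrt (GWLoss dm dm' (pushC PX PY μ)) :=
      dGW_le_sqrt dm dm' (pushC_isCoupling PX PY hc)
    have h2 : GWLoss dm dm' (pushC PX PY μ) = ∑ z, J μ z * g z ^ 2 := GWLoss_push PX PY dm dm' μ
    have h3 : Real.sqrt (∑ z, J μ z * g z ^ 2) ≤ Real.sqrt (∑ z, J μ z * f z ^ 2) + D :=
      sqrt_comparison hμX hμY PX PY hc g f habG
    have h4 : ∑ z, J μ z * f z ^ 2 = GWLoss dX dY μ := (GWLoss_prod dX dY μ).symm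
    rw [h2] at h1
    rw [h4] at h3
    exact le_trans h1 h3

end Core

lemma exists_pp {Z : Type*} [Fintype Z] {m : ℕ} (hm : 1 ≤ m) (h : m ≤ Fintype.card Z) :
    Nonempty (PointedPartition Z m) := by
  classical
  have hne : Nonempty (Fin m ↪ Z) :=
    Function.Embedding.nonempty_iff_card_le.2 (by simpa using h)
  obtain ⟨e⟩ := hne
  refine ⟨⟨fun z => if hz : ∃ p, e p = z then hz.choose else ⟨0, hm⟩, e, fun p => ?_⟩⟩
  have hex : ∃ p', e p' = e p := ⟨p, rfl⟩
  simp only [dif_pos hex]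
  exact e.injective hex.choose_spec

end QGW
end AuxQGW


/-- `min_{P_X,P_Y} |d_GW(X,Y) − d_GW(Xᵐ,Yᵐ)| ≤ 2 (q_m(X) + q_m(Y))`. -/
theorem min_abs_dGW_diff_le_two_qEccMin
    {X Y : Type*} [Fintype X] [Fintype Y] [MetricSpace X] [MetricSpace Y]
    (μX : X → ℝ) (μY : Y → ℝ) (hμX : IsProb μX) (hμY : IsProb μY)
    (m : ℕ) (hm : 1 ≤ m) (hmX : m ≤ Fintype.card X) (hmY : m ≤ Fintype.card Y) :
    sInf {r : ℝ | ∃ (PX : PointedPartition X m) (PY : PointedPartition Y m),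
        r = |dGW (fun x x' => dist x x') (fun y y' => dist y y') μX μY -
          dGW (fun p q => dist (PX.rep p) (PX.rep q))
            (fun p q => dist (PY.rep p) (PY.rep q))
            (blockMass μX PX) (blockMass μY PY)|} ≤
      2 * (qEccMin X (fun x x' => dist x x') μX m +
        qEccMin Y (fun y y' => dist y y') μY m) := by
  classical
  obtain ⟨P0X⟩ := QGW.exists_pp (Z := X) hm hmX
  obtain ⟨P0Y⟩ := QGW.exists_pp (Z := Y) hm hmY
  set T : Set ℝ := {r : ℝ | ∃ (PX : PointedPartition X m) (PY : PointedPartition Y m),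
      r = |dGW (fun x x' => dist x x') (fun y y' => dist y y') μX μY -
        dGW (fun p q => dist (PX.rep p) (PX.rep q))
          (fun p q => dist (PY.rep p) (PY.rep q))
          (blockMass μX PX) (blockMass μY PY)|} with hT
  have hbdd : BddBelow T := by
    refine ⟨0, ?_⟩
    rintro r ⟨PX, PY, rfl⟩
    exact abs_nonneg _
  have key : ∀ (PX : PointedPartition X m) (PY : PointedPartition Y m),
      sInf T ≤ 2 * (qEcc (fun x x' => dist x x') μX PX
        + qEcc (fun y y' => dist y y') μY PY) := by
    intro PX PY
    refine le_trans (csInf_le hbdd ⟨PX, PY, rfl⟩) ?_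
    exact QGW.core_ineq hμX hμY PX PY
  have h1 : ∀ PY : PointedPartition Y m,
      sInf T ≤ 2 * (qEccMin X (fun x x' => dist x x') μX m
        + qEcc (fun y y' => dist y y') μY PY) := by
    intro PY
    have hmin : (sInf T - 2 * qEcc (fun y y' => dist y y') μY PY) / 2
        ≤ qEccMin X (fun x x' => dist x x') μX m := by
      unfold qEccMin
      refine le_csInf ⟨qEcc (fun x x' => dist x x') μX P0X, ⟨P0X, rfl⟩⟩ ?_
      rintro r ⟨PX, rfl⟩
      have := key PX PY
      linarith
    linarith
  have hmin2 : (sInf T - 2 * qEccMin X (fun x x' => dist x x') μX m) / 2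
      ≤ qEccMin Y (fun y y' => dist y y') μY m := by
    show _ ≤ sInf {r : ℝ | ∃ P : PointedPartition Y m, r = qEcc (fun y y' => dist y y') μY P}
    refine le_csInf ⟨qEcc (fun y y' => dist y y') μY P0Y, ⟨P0Y, rfl⟩⟩ ?_
    rintro r ⟨PY, rfl⟩
    have := h1 PY
    linarith
  linarith
end
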